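/- arXiv:1005.0128 — 3 statements merged into one kernel-verified Lean document; each statement's English description precedes it below -/
import Mathlib

section
/- For a rational subspace s̲ of dimension k, the intersection I_{s̲} ∩ I_{k-1} equals the sum of the ideals I_{t̲} over all rational subspaces t̲ ⊊ s̲ of dimension k-1, where I_{t̲} = (d_{X∖t̲}) and I_{k-1} = Σ_{t̲ rational, dim t̲ = k-1} I_{t̲}. -/
set_option linter.unusedSectionVars false
set_option linter.unusedVariables false
set_option linter.unnecessarySimpa false
set_option maxHeartbeats 1000000
set_option synthInstance.maxHeartbeats 400000


/-!
STATEMENT 4: For a rational subspace s̲ of dimension k (k ≥ 1), the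
intersection I_{s̲} ∩ I_{k-1} equals the sum of the ideals I_{t̲} over all
rational subspaces t̲ ⊊ s̲ of dimension k-1; here I_{t̲} = (d_{X∖t̲}) and
I_{k-1} = Σ_{t̲ rational, dim t̲ = k-1} I_{t̲}.
-/

noncomputable section

open scoped BigOperators

def linP {n : ℕ} (a : Fin n → ℝ) : MvPolynomial (Fin n) ℝ :=
  ∑ i, MvPolynomial.C (a i) * MvPolynomial.X i

def RationalSub {n m : ℕ} (X : Fin m → Fin n → ℝ)
    (W : Submodule ℝ (Fin n → ℝ)) : Prop :=
  W = Submodule.span ℝ (Set.range X ∩ ↑W)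

open Classical in
/-- The principal ideal I_{W} = (d_{X∖W}) generated by the product of the
(linear forms of the) elements of X not lying in W. -/
def Isub {n m : ℕ} (X : Fin m → Fin n → ℝ) (W : Submodule ℝ (Fin n → ℝ)) :
    Ideal (MvPolynomial (Fin n) ℝ) :=
  Ideal.span {∏ i ∈ Finset.univ.filter (fun i => X i ∉ W), linP (X i)}

/-- I_j = Σ over rational subspaces of dimension j of I_{t̲}. -/
def Ilev {n m : ℕ} (X : Fin m → Fin n → ℝ) (j : ℕ) :
    Ideal (MvPolynomial (Fin n) ℝ) :=
  ⨆ W ∈ {W : Submodule ℝ (Fin n → ℝ) | RationalSub X W ∧ Module.finrank ℝ W = j},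
    Isub X W

namespace Stmt4Aux

open MvPolynomial

variable {υ υ' : Type*} [Fintype υ] [DecidableEq υ] [Fintype υ'] [DecidableEq υ']

/-- generic linear form -/
def linG (a : υ → ℝ) : MvPolynomial υ ℝ :=
  ∑ u, MvPolynomial.C (a u) * MvPolynomial.X u

lemma linP_eq_linG {n : ℕ} (a : Fin n → ℝ) : linP a = linG a := rfl

lemma linG_add (a b : υ → ℝ) : linG (a + b) = linG a + linG b := by
  simp [linG, map_add, add_mul, Finset.sum_add_distrib]

lemma linG_smul (r : ℝ) (a : υ → ℝ) : linG (r • a) = MvPolynomial.C r * linG a := by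
  simp [linG, Finset.mul_sum, mul_assoc, map_mul]

def linGL : (υ → ℝ) →ₗ[ℝ] MvPolynomial υ ℝ where
  toFun := linG
  map_add' := linG_add
  map_smul' r a := by simp [linG_smul, smul_eq_C_mul]

lemma linG_single (u : υ) (c : ℝ) : linG (Pi.single u c) = MvPolynomial.C c * MvPolynomial.X u := by
  rw [linG, Finset.sum_eq_single u]
  · simp
  · intro b _ hb; simp [Pi.single_apply, hb]
  · simp

lemma sum_single_pi (a : υ → ℝ) : ∑ u, a u • (Pi.single u 1 : υ → ℝ) = a := by
  funext v
  simp [Finset.sum_apply, Pi.single_apply]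

lemma eval₂_linG {A : Type*} [CommRing A] (φ : ℝ →+* A) (g : υ → A) (a : υ → ℝ) :
    eval₂ φ g (linG a) = ∑ u, φ (a u) * g u := by
  simp [linG, eval₂_sum, eval₂_mul, eval₂_C, eval₂_X]

lemma aeval_linG {A : Type*} [CommRing A] [Algebra ℝ A] (g : υ → A) (a : υ → ℝ) :
    aeval g (linG a) = ∑ u, a u • g u := by
  rw [aeval_def, eval₂_linG]
  simp [Algebra.smul_def]

lemma coeff_linG (a : υ → ℝ) (u : υ) :
    MvPolynomial.coeff (Finsupp.single u 1) (linG a) = a u := by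
  rw [linG]
  rw [MvPolynomial.coeff_sum]
  rw [Finset.sum_eq_single u]
  · simp [coeff_C_mul, coeff_X]
  · intro b _ hb
    rw [coeff_C_mul, MvPolynomial.coeff_X', if_neg, mul_zero]
    intro h
    exact hb (Finsupp.single_left_injective one_ne_zero h.symm).symm
  · simp

/-- key computation: applying an `aeval` determined by a linear map to a linear form -/
lemma aeval_linG_comp (ψ : (υ → ℝ) →ₗ[ℝ] (υ' → ℝ)) (a : υ → ℝ) :
    aeval (fun u => linG (ψ (Pi.single u 1))) (linG a) = linG (ψ a) := by
  rw [aeval_linG]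
  have : ∑ u, a u • linG (ψ (Pi.single u 1 : υ → ℝ))
      = ∑ u, linGL (ψ (a u • (Pi.single u 1 : υ → ℝ))) := by
    apply Finset.sum_congr rfl
    intro u _
    rw [map_smul, map_smul]; rfl
  rw [this, ← map_sum, ← map_sum, sum_single_pi a]
  rfl

-- part2


variable {υ : Type*} [Fintype υ] [DecidableEq υ]

/-- the ideal generated by a set of variables -/
def varIdeal (T : Set υ) : Ideal (MvPolynomial υ ℝ) :=
  Ideal.span ((fun u => (MvPolynomial.X u : MvPolynomial υ ℝ)) '' T)

open Classical in
def killMap (T : Set υ) : MvPolynomial υ ℝ →ₐ[ℝ] MvPolynomial υ ℝ :=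
  aeval (fun u => if u ∈ T then 0 else MvPolynomial.X u)

open Classical in
lemma sub_killMap_mem (T : Set υ) (f : MvPolynomial υ ℝ) :
    f - killMap T f ∈ varIdeal T := by
  induction f using MvPolynomial.induction_on with
  | C a => simp [killMap, varIdeal]
  | add p q hp hq =>
      have : p + q - killMap T (p + q) = (p - killMap T p) + (q - killMap T q) := by
        rw [map_add]; ring
      rw [this]; exact add_mem hp hq
  | mul_X p u hp =>
      rw [killMap, map_mul, aeval_X]
      by_cases hu : u ∈ T
      · rw [if_pos hu, mul_zero, sub_zero]
        exact Ideal.mul_mem_left _ _ (Ideal.subset_span ⟨u, hu, rfl⟩)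
      · rw [if_neg hu]
        have : p * X u - (aeval fun u => if u ∈ T then 0 else X u) p * X u
            = (p - killMap T p) * X u := by rw [killMap]; ring
        rw [this]
        exact Ideal.mul_mem_right _ _ hp

lemma varIdeal_eq_ker (T : Set υ) :
    varIdeal T = RingHom.ker (killMap T : MvPolynomial υ ℝ →ₐ[ℝ] MvPolynomial υ ℝ) := by
  classical
  apply le_antisymm
  · rw [varIdeal, Ideal.span_le]
    rintro - ⟨u, hu, rfl⟩
    simp only [SetLike.mem_coe, RingHom.mem_ker]
    rw [killMap, aeval_X, if_pos hu]
  · intro f hf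
    rw [RingHom.mem_ker] at hf
    have := sub_killMap_mem T f
    rwa [hf, sub_zero] at this

lemma varIdeal_isPrime (T : Set υ) : (varIdeal T).IsPrime := by
  rw [varIdeal_eq_ker]
  exact RingHom.ker_isPrime _

open Classical in
lemma killMap_linG (T : Set υ) (v : υ → ℝ) :
    killMap T (linG v) = linG (fun u => if u ∈ T then 0 else v u) := by
  rw [killMap, aeval_linG, linG]
  apply Finset.sum_congr rfl
  intro u _
  by_cases hu : u ∈ T
  · simp [hu]
  · simp [hu, smul_eq_C_mul]

lemma linG_mem_varIdeal_iff (T : Set υ) (v : υ → ℝ) :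
    linG v ∈ varIdeal T ↔ ∀ u, u ∉ T → v u = 0 := by
  classical
  constructor
  · intro h u hu
    rw [varIdeal_eq_ker, RingHom.mem_ker, killMap_linG] at h
    have := congrArg (MvPolynomial.coeff (Finsupp.single u 1)) h
    rw [coeff_linG] at this
    simpa [hu] using this
  · intro h
    rw [linG]
    apply Ideal.sum_mem
    intro u _
    by_cases hu : u ∈ T
    · exact Ideal.mul_mem_left _ _ (Ideal.subset_span ⟨u, hu, rfl⟩)
    · rw [h u hu]; simp

lemma varIdeal_ne_top (T : Set υ) : varIdeal T ≠ ⊤ :=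
  (varIdeal_isPrime T).ne_top

/-- the maximal ideal of all variables -/
lemma span_range_X_eq_ker_constantCoeff :
    varIdeal (Set.univ : Set υ)
      = RingHom.ker (constantCoeff : MvPolynomial υ ℝ →+* ℝ) := by
  apply le_antisymm
  · rw [varIdeal, Ideal.span_le]
    rintro - ⟨u, -, rfl⟩
    simp [RingHom.mem_ker]
  · intro f hf
    rw [RingHom.mem_ker] at hf
    have : ∀ g : MvPolynomial υ ℝ, g - C (constantCoeff g) ∈ varIdeal (Set.univ : Set υ) := by
      intro g
      induction g using MvPolynomial.induction_on with
      | C a => simp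
      | add p q hp hq =>
          have : p + q - C (constantCoeff (p + q))
              = (p - C (constantCoeff p)) + (q - C (constantCoeff q)) := by
            rw [map_add, map_add]; ring
          rw [this]; exact add_mem hp hq
      | mul_X p u hp =>
          rw [map_mul, constantCoeff_X, mul_zero, map_zero, sub_zero]
          exact Ideal.mul_mem_left _ _ (Ideal.subset_span ⟨u, trivial, rfl⟩)
    have h2 := this f
    rwa [hf, map_zero, sub_zero] at h2
    
lemma varIdeal_univ_isMaximal : (varIdeal (Set.univ : Set υ)).IsMaximal := by
  rw [span_range_X_eq_ker_constantCoeff]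
  exact RingHom.ker_isMaximal_of_surjective _ (fun r => ⟨C r, constantCoeff_C υ r⟩)

-- part 3: PrimRing machinery
section PrimRing

def PrimRing (R : Type*) [CommRing R] : Prop :=
  ∀ a b : R, a * b = 0 → a = 0 ∨ IsNilpotent b

lemma primRing_of_equiv {R S : Type*} [CommRing R] [CommRing S] (e : R ≃+* S)
    (h : PrimRing R) : PrimRing S := by
  intro a b hab
  rcases h (e.symm a) (e.symm b) (by rw [← map_mul, hab, map_zero]) with h1 | h1
  · left
    have := congrArg e h1
    simpa using this
  · right
    have := h1.map (e : R →+* S)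
    simpa using this

lemma primRing_polynomial {R : Type*} [CommRing R] (h : PrimRing R) :
    PrimRing (Polynomial R) := by
  intro a b hab
  by_cases ha : a = 0
  · exact Or.inl ha
  right
  have hb : b ∉ nonZeroDivisors (Polynomial R) := by
    intro hmem
    exact ha (mem_nonZeroDivisors_iff.mp hmem |>.2 a hab)
  obtain ⟨c, hc0, hcb⟩ := Polynomial.notMem_nonZeroDivisors_iff.mp hb
  refine Polynomial.isNilpotent_iff.mpr (fun i => ?_)
  have hcoeff : c * b.coeff i = 0 := by
    have := congrArg (fun p => Polynomial.coeff p i) hcb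
    simpa [Polynomial.coeff_smul, smul_eq_mul] using this
  rcases h c (b.coeff i) hcoeff with h1 | h1
  · exact absurd h1 hc0
  · exact h1

lemma primRing_mvpoly_fin (d : ℕ) :
    ∀ (R : Type) [CommRing R], PrimRing R → PrimRing (MvPolynomial (Fin d) R) := by
  induction d with
  | zero =>
      intro R _ h
      exact primRing_of_equiv ((MvPolynomial.isEmptyRingEquiv R (Fin 0)).symm) h
  | succ d ih =>
      intro R _ h
      have h1 : PrimRing (Polynomial (MvPolynomial (Fin d) R)) :=
        primRing_polynomial (ih R h)
      exact primRing_of_equiv ((MvPolynomial.finSuccEquiv R d).toRingEquiv).symm h1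

lemma primRing_mvpoly {σ : Type} [Fintype σ] {R : Type} [CommRing R] (h : PrimRing R) :
    PrimRing (MvPolynomial σ R) :=
  primRing_of_equiv ((MvPolynomial.renameEquiv R (Fintype.equivFin σ)).toRingEquiv).symm
    (primRing_mvpoly_fin _ R h)

lemma primRing_quotient {R : Type*} [CommRing R] {q : Ideal R} (hq : q.IsPrimary) :
    PrimRing (R ⧸ q) := by
  intro a b hab
  obtain ⟨a', rfl⟩ := Ideal.Quotient.mk_surjective a
  obtain ⟨b', rfl⟩ := Ideal.Quotient.mk_surjective b
  have hmem : a' * b' ∈ q := by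
    rw [← Ideal.Quotient.eq_zero_iff_mem, map_mul]
    exact hab
  rcases (Ideal.isPrimary_iff.mp hq).2 hmem with h1 | h1
  · exact Or.inl (Ideal.Quotient.eq_zero_iff_mem.mpr h1)
  · right
    obtain ⟨N, hN⟩ := h1
    exact ⟨N, by rw [← map_pow, Ideal.Quotient.eq_zero_iff_mem]; exact hN⟩

end PrimRing

section IdealTransport

variable {R S : Type*} [CommRing R] [CommRing S]

lemma mem_map_ringEquiv (e : R ≃+* S) (I : Ideal R) (x : S) :
    x ∈ I.map (e : R →+* S) ↔ e.symm x ∈ I := by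
  constructor
  · intro hx
    obtain ⟨y, hy, rfl⟩ := (Ideal.mem_map_iff_of_surjective _ e.surjective).mp hx
    simpa using hy
  · intro h
    have : x = e (e.symm x) := (e.apply_symm_apply x).symm
    rw [this]
    exact Ideal.mem_map_of_mem _ h

lemma map_radical_ringEquiv (e : R ≃+* S) (I : Ideal R) :
    (I.radical).map (e : R →+* S) = (I.map (e : R →+* S)).radical := by
  ext x
  rw [mem_map_ringEquiv]
  constructor
  · rintro ⟨n, hn⟩
    exact ⟨n, (mem_map_ringEquiv e I _).mpr (by rwa [map_pow])⟩
  · rintro ⟨n, hn⟩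
    refine ⟨n, ?_⟩
    have := (mem_map_ringEquiv e I _).mp hn
    rwa [map_pow] at this

lemma isPrimary_map_ringEquiv (e : R ≃+* S) {I : Ideal R} (h : I.IsPrimary) :
    (I.map (e : R →+* S)).IsPrimary := by
  rw [Ideal.isPrimary_iff]
  constructor
  · intro htop
    refine (Ideal.isPrimary_iff.mp h).1 (Ideal.eq_top_iff_one _ |>.mpr ?_)
    have : (1 : S) ∈ I.map (e : R →+* S) := by rw [htop]; trivial
    simpa using (mem_map_ringEquiv e I 1).mp this
  · intro x y hxy
    have : e.symm x * e.symm y ∈ I := by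
      rw [← map_mul]
      exact (mem_map_ringEquiv e I _).mp hxy
    rcases (Ideal.isPrimary_iff.mp h).2 this with h1 | h1
    · exact Or.inl ((mem_map_ringEquiv e I x).mpr h1)
    · right
      rw [← map_radical_ringEquiv]
      exact (mem_map_ringEquiv e _ y).mpr h1

lemma isPrimary_map_C {R : Type} [CommRing R] {q : Ideal R} (hq : q.IsPrimary)
    (τ : Type) [Fintype τ] :
    (q.map (MvPolynomial.C : R →+* MvPolynomial τ R)).IsPrimary := by
  have hPR : PrimRing (MvPolynomial τ (R ⧸ q)) := primRing_mvpoly (primRing_quotient hq)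
  set J := q.map (MvPolynomial.C : R →+* MvPolynomial τ R) with hJdef
  let e : MvPolynomial τ (R ⧸ q) ≃ₐ[R] MvPolynomial τ R ⧸ J :=
    MvPolynomial.quotientEquivQuotientMvPolynomial q
  have hqn : q ≠ ⊤ := (Ideal.isPrimary_iff.mp hq).1
  have : Nontrivial (R ⧸ q) := Ideal.Quotient.nontrivial_iff.mpr hqn
  rw [Ideal.isPrimary_iff]
  constructor
  · intro hJ
    have h1 : (1 : MvPolynomial τ R ⧸ J) = 0 :=
      Ideal.Quotient.eq_zero_iff_mem.mpr (by rw [hJ]; trivial)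
    have h2 : (1 : MvPolynomial τ (R ⧸ q)) = 0 := by
      have := congrArg e.symm h1
      simpa using this
    exact one_ne_zero h2
  · intro x y hxy
    by_cases hx : x ∈ J
    · exact Or.inl hx
    right
    have hq0 : (Ideal.Quotient.mk J x) * (Ideal.Quotient.mk J y) = 0 := by
      rw [← map_mul, Ideal.Quotient.eq_zero_iff_mem]
      exact hxy
    rcases hPR (e.symm (Ideal.Quotient.mk J x)) (e.symm (Ideal.Quotient.mk J y))
        (by rw [← map_mul, hq0, map_zero]) with h1 | h1
    · exfalso
      apply hx
      rw [← Ideal.Quotient.eq_zero_iff_mem]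
      have := congrArg e h1
      simpa using this
    · have h2 : IsNilpotent (Ideal.Quotient.mk J y) := by
        have := h1.map (e : MvPolynomial τ (R ⧸ q) →+* MvPolynomial τ R ⧸ J)
        simpa using this
      obtain ⟨N, hN⟩ := h2
      exact ⟨N, by rwa [← map_pow, Ideal.Quotient.eq_zero_iff_mem] at hN⟩

end IdealTransport

-- part 4: real part descent
section RePoly

open MvPolynomial

variable {σ : Type*}

def rePoly (f : MvPolynomial σ ℂ) : MvPolynomial σ ℝ :=
  ∑ mo ∈ f.support, monomial mo (f.coeff mo).re

lemma coeff_rePoly (f : MvPolynomial σ ℂ) (mo : σ →₀ ℕ) :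
    coeff mo (rePoly f) = (f.coeff mo).re := by
  classical
  rw [rePoly, coeff_sum]
  rw [Finset.sum_eq_single mo]
  · simp [coeff_monomial]
  · intro b _ hb
    simp [coeff_monomial, hb]
  · intro h
    simp [coeff_monomial, MvPolynomial.notMem_support_iff.mp h]

lemma rePoly_map (g : MvPolynomial σ ℝ) :
    rePoly (MvPolynomial.map (algebraMap ℝ ℂ) g) = g := by
  apply MvPolynomial.ext
  intro mo
  rw [coeff_rePoly, coeff_map]
  simp

lemma rePoly_add (f g : MvPolynomial σ ℂ) : rePoly (f + g) = rePoly f + rePoly g := by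
  apply MvPolynomial.ext
  intro mo
  simp [coeff_rePoly, coeff_add, Complex.add_re]

lemma rePoly_zero : rePoly (0 : MvPolynomial σ ℂ) = 0 := by
  apply MvPolynomial.ext
  intro mo
  simp [coeff_rePoly]

lemma rePoly_map_mul (g : MvPolynomial σ ℝ) (f : MvPolynomial σ ℂ) :
    rePoly (MvPolynomial.map (algebraMap ℝ ℂ) g * f) = g * rePoly f := by
  classical
  apply MvPolynomial.ext
  intro mo
  rw [coeff_rePoly, coeff_mul, coeff_mul, Complex.re_sum]
  apply Finset.sum_congr rfl
  intro x _
  rw [coeff_map, coeff_rePoly]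
  simp [Complex.mul_re]

lemma mem_of_mapC_mem (I : Ideal (MvPolynomial σ ℝ)) (u : MvPolynomial σ ℝ)
    (h : MvPolynomial.map (algebraMap ℝ ℂ) u ∈
      I.map (MvPolynomial.map (algebraMap ℝ ℂ) : MvPolynomial σ ℝ →+* MvPolynomial σ ℂ)) :
    u ∈ I := by
  have key : ∀ x ∈ I.map (MvPolynomial.map (algebraMap ℝ ℂ) :
      MvPolynomial σ ℝ →+* MvPolynomial σ ℂ),
      ∀ h : MvPolynomial σ ℂ, rePoly (h * x) ∈ I := by
    intro x hx
    have hx' : x ∈ Submodule.span (MvPolynomial σ ℂ)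
        ((MvPolynomial.map (algebraMap ℝ ℂ) : MvPolynomial σ ℝ →+* MvPolynomial σ ℂ) '' I) := hx
    refine Submodule.span_induction ?_ ?_ ?_ ?_ hx'
    · rintro - ⟨g, hg, rfl⟩ h
      rw [mul_comm, rePoly_map_mul]
      exact Ideal.mul_mem_right _ _ hg
    · intro h
      rw [mul_zero, rePoly_zero]
      exact zero_mem I
    · intro x y hx hy ihx ihy h
      rw [mul_add, rePoly_add]
      exact add_mem (ihx h) (ihy h)
    · intro a x hx ihx h
      rw [smul_eq_mul, ← mul_assoc]
      exact ihx (h * a)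
  have := key _ h 1
  rwa [one_mul, rePoly_map] at this

end RePoly

-- part 5: arrangement basics
section Arrangement

open MvPolynomial

variable {n m : ℕ}

open Classical in
def dOut (X : Fin m → Fin n → ℝ) (W : Submodule ℝ (Fin n → ℝ)) : MvPolynomial (Fin n) ℝ :=
  ∏ i ∈ Finset.univ.filter (fun i => X i ∉ W), linP (X i)

lemma Isub_eq_span (X : Fin m → Fin n → ℝ) (W : Submodule ℝ (Fin n → ℝ)) :
    Isub X W = Ideal.span {dOut X W} := rfl

open Classical in
def ddP (X : Fin m → Fin n → ℝ) (s t : Submodule ℝ (Fin n → ℝ)) : MvPolynomial (Fin n) ℝ :=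
  ∏ i ∈ Finset.univ.filter (fun i => X i ∉ t ∧ X i ∈ s), linP (X i)

open Classical in
def ggP (X : Fin m → Fin n → ℝ) (s t : Submodule ℝ (Fin n → ℝ)) : MvPolynomial (Fin n) ℝ :=
  ∏ i ∈ Finset.univ.filter (fun i => X i ∉ t ∧ ¬ X i ∈ s), linP (X i)

open Classical in
lemma dOut_split (X : Fin m → Fin n → ℝ) (s t : Submodule ℝ (Fin n → ℝ)) :
    dOut X t = ddP X s t * ggP X s t := by
  rw [dOut, ddP, ggP,
    ← Finset.prod_filter_mul_prod_filter_not (Finset.univ.filter (fun i => X i ∉ t))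
      (fun i => X i ∈ s) (fun i => linP (X i)),
    Finset.filter_filter, Finset.filter_filter]

open Classical in
lemma ggP_eq_of_le (X : Fin m → Fin n → ℝ) {s t : Submodule ℝ (Fin n → ℝ)} (hts : t ≤ s) :
    ggP X s t = dOut X s := by
  rw [ggP, dOut]
  apply Finset.prod_congr _ (fun _ _ => rfl)
  apply Finset.filter_congr
  intro i _
  constructor
  · exact fun h => h.2
  · exact fun h => ⟨fun hmem => h (hts hmem), h⟩

lemma dOut_eq_of_le (X : Fin m → Fin n → ℝ) {s t : Submodule ℝ (Fin n → ℝ)} (hts : t ≤ s) :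
    dOut X t = ddP X s t * dOut X s := by
  rw [dOut_split X s t, ggP_eq_of_le X hts]

lemma rational_span (X : Fin m → Fin n → ℝ) (A : Set (Fin n → ℝ)) (hA : A ⊆ Set.range X) :
    RationalSub X (Submodule.span ℝ A) := by
  unfold RationalSub
  apply le_antisymm
  · exact Submodule.span_mono (fun a ha => ⟨hA ha, Submodule.subset_span ha⟩)
  · exact Submodule.span_le.mpr (fun v hv => hv.2)

lemma exists_mem_notin (X : Fin m → Fin n → ℝ) {s t : Submodule ℝ (Fin n → ℝ)}
    (hs : RationalSub X s) (hst : ¬ s ≤ t) : ∃ i, X i ∈ s ∧ X i ∉ t := by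
  by_contra h
  push_neg at h
  apply hst
  have h2 : s = Submodule.span ℝ (Set.range X ∩ ↑s) := hs
  rw [h2]
  apply Submodule.span_le.mpr
  rintro v ⟨⟨i, rfl⟩, hvs⟩
  exact h i hvs

lemma rational_extend (X : Fin m → Fin n → ℝ) (hX0 : ∀ i, X i ≠ 0)
    {s : Submodule ℝ (Fin n → ℝ)} (hs : RationalSub X s) {j : ℕ}
    (hjs : j ≤ Module.finrank ℝ s) :
    ∀ W : Submodule ℝ (Fin n → ℝ), RationalSub X W → W ≤ s → Module.finrank ℝ W ≤ j →
    ∃ t, RationalSub X t ∧ W ≤ t ∧ t ≤ s ∧ Module.finrank ℝ t = j := by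
  suffices key : ∀ (d : ℕ) (W : Submodule ℝ (Fin n → ℝ)), RationalSub X W → W ≤ s →
      Module.finrank ℝ W + d = j →
      ∃ t, RationalSub X t ∧ W ≤ t ∧ t ≤ s ∧ Module.finrank ℝ t = j by
    intro W h1 h2 h3
    exact key (j - Module.finrank ℝ W) W h1 h2 (by omega)
  intro d
  induction d with
  | zero =>
      intro W h1 h2 h3
      exact ⟨W, h1, le_rfl, h2, by omega⟩
  | succ d ih =>
      intro W h1 h2 h3
      have hns : ¬ s ≤ W := by
        intro hle
        have := Submodule.finrank_mono hle
        omega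
      obtain ⟨i, his, hiW⟩ := exists_mem_notin X hs hns
      have hrat : RationalSub X (W ⊔ Submodule.span ℝ {X i}) := by
        have heq : W ⊔ Submodule.span ℝ {X i}
            = Submodule.span ℝ ((Set.range X ∩ ↑W) ∪ {X i}) := by
          have h1' : W = Submodule.span ℝ (Set.range X ∩ ↑W) := h1
          rw [Submodule.span_union, ← h1']
        rw [heq]
        apply rational_span
        rintro v (⟨⟨i', rfl⟩, -⟩ | rfl)
        · exact ⟨i', rfl⟩
        · exact ⟨i, rfl⟩
      have hW's : W ⊔ Submodule.span ℝ {X i} ≤ s :=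
        sup_le h2 ((Submodule.span_singleton_le_iff_mem _ _).mpr his)
      have hdisj : W ⊓ Submodule.span ℝ {X i} = ⊥ := by
        rw [← disjoint_iff]
        exact (Submodule.disjoint_span_singleton' (hX0 i)).mpr hiW
      have hfr : Module.finrank ℝ ↥(W ⊔ Submodule.span ℝ {X i}) = Module.finrank ℝ W + 1 := by
        have h4 := Submodule.finrank_sup_add_finrank_inf_eq W (Submodule.span ℝ {X i})
        rw [hdisj, finrank_span_singleton (hX0 i)] at h4
        simpa using h4
      obtain ⟨t, ht1, ht2, ht3, ht4⟩ := ih (W ⊔ Submodule.span ℝ {X i}) hrat hW's (by omega)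
      exact ⟨t, ht1, le_trans le_sup_left ht2, ht3, ht4⟩

def Tlow (X : Fin m → Fin n → ℝ) (s : Submodule ℝ (Fin n → ℝ)) (j : ℕ) :
    Set (Submodule ℝ (Fin n → ℝ)) :=
  {t | RationalSub X t ∧ t < s ∧ Module.finrank ℝ t = j}

def Jlow (X : Fin m → Fin n → ℝ) (s : Submodule ℝ (Fin n → ℝ)) (j : ℕ) :
    Ideal (MvPolynomial (Fin n) ℝ) :=
  ⨆ t ∈ Tlow X s j, Ideal.span {ddP X s t}

def Ps (s : Submodule ℝ (Fin n → ℝ)) : Ideal (MvPolynomial (Fin n) ℝ) :=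
  Ideal.span (linP '' (s : Set (Fin n → ℝ)))

lemma span_ddP_le_Jlow (X : Fin m → Fin n → ℝ) {s : Submodule ℝ (Fin n → ℝ)} {j : ℕ}
    {t : Submodule ℝ (Fin n → ℝ)} (ht : t ∈ Tlow X s j) :
    Ideal.span {ddP X s t} ≤ Jlow X s j :=
  le_iSup₂ (f := fun t _ => Ideal.span {ddP X s t}) t ht

open Classical in
lemma ddP_mem_Jlow (X : Fin m → Fin n → ℝ) (hX0 : ∀ i, X i ≠ 0)
    {s : Submodule ℝ (Fin n → ℝ)} (hs : RationalSub X s) {j : ℕ}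
    (hdim : Module.finrank ℝ s = j + 1) {t : Submodule ℝ (Fin n → ℝ)}
    (htr : Module.finrank ℝ t = j) : ddP X s t ∈ Jlow X s j := by
  set A : Set (Fin n → ℝ) := {v | v ∈ Set.range X ∧ v ∈ s ∧ v ∈ t} with hA
  have hrat : RationalSub X (Submodule.span ℝ A) := rational_span X _ (fun v hv => hv.1)
  have hrs : Submodule.span ℝ A ≤ s := Submodule.span_le.mpr (fun v hv => hv.2.1)
  have hrt : Submodule.span ℝ A ≤ t := Submodule.span_le.mpr (fun v hv => hv.2.2)
  have hfr : Module.finrank ℝ (Submodule.span ℝ A) ≤ j := by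
    have := Submodule.finrank_mono hrt
    omega
  obtain ⟨t', ht'1, ht'2, ht'3, ht'4⟩ :=
    rational_extend X hX0 hs (j := j) (by omega) (Submodule.span ℝ A) hrat hrs hfr
  have ht'lt : t' < s := lt_of_le_of_ne ht'3 (fun h => by rw [h] at ht'4; omega)
  have ht'T : t' ∈ Tlow X s j := ⟨ht'1, ht'lt, ht'4⟩
  apply span_ddP_le_Jlow X ht'T
  rw [Ideal.mem_span_singleton]
  rw [ddP, ddP]
  apply Finset.prod_dvd_prod_of_subset
  intro i hi
  rw [Finset.mem_filter] at hi ⊢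
  refine ⟨hi.1, fun hit => ?_, hi.2.2⟩
  exact hi.2.1 (ht'2 (Submodule.subset_span ⟨⟨i, rfl⟩, hi.2.2, hit⟩))

lemma Ilev_le_Jlow (X : Fin m → Fin n → ℝ) (hX0 : ∀ i, X i ≠ 0)
    {s : Submodule ℝ (Fin n → ℝ)} (hs : RationalSub X s) {j : ℕ}
    (hdim : Module.finrank ℝ s = j + 1) : Ilev X j ≤ Jlow X s j := by
  rw [Ilev]
  apply iSup₂_le
  rintro t ⟨ht1, ht2⟩
  rw [Isub_eq_span, Ideal.span_le, Set.singleton_subset_iff]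
  have : dOut X t ∈ Ideal.span {ddP X s t} := by
    rw [Ideal.mem_span_singleton, dOut_split X s t]
    exact Dvd.intro _ rfl
  have hdd := ddP_mem_Jlow X hX0 hs hdim ht2
  rw [dOut_split X s t]
  exact Ideal.mul_mem_right _ _ hdd

open Classical in
lemma Jlow_le_Ps (X : Fin m → Fin n → ℝ) {s : Submodule ℝ (Fin n → ℝ)}
    (hs : RationalSub X s) {j : ℕ} : Jlow X s j ≤ Ps s := by
  apply iSup₂_le
  rintro t ⟨ht1, ht2, ht3⟩
  rw [Ideal.span_le, Set.singleton_subset_iff]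
  obtain ⟨i0, hi0s, hi0t⟩ := exists_mem_notin X hs (not_le_of_gt ht2)
  have hi0mem : i0 ∈ Finset.univ.filter (fun i => X i ∉ t ∧ X i ∈ s) := by
    rw [Finset.mem_filter]
    exact ⟨Finset.mem_univ _, hi0t, hi0s⟩
  rw [ddP, ← Finset.mul_prod_erase _ _ hi0mem]
  exact Ideal.mul_mem_right _ _ (Ideal.subset_span ⟨X i0, hi0s, rfl⟩)

end Arrangement

-- part 6: Nullstellensatz
section Null

open MvPolynomial

variable {n m : ℕ}

open Classical in
lemma linP_mem_radical_Jlow (X : Fin m → Fin n → ℝ) (hX0 : ∀ i, X i ≠ 0)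
    {s : Submodule ℝ (Fin n → ℝ)} (hs : RationalSub X s) {j : ℕ}
    (hdim : Module.finrank ℝ s = j + 1) :
    ∀ c ∈ s, linP c ∈ (Jlow X s j).radical := by
  intro c hcs
  set mapC := (MvPolynomial.map (algebraMap ℝ ℂ) :
    MvPolynomial (Fin n) ℝ →+* MvPolynomial (Fin n) ℂ) with hmapC
  set JC := (Jlow X s j).map mapC with hJC
  have hvan : ∀ ξ ∈ MvPolynomial.zeroLocus ℂ JC, MvPolynomial.eval ξ (mapC (linP c)) = 0 := by
    intro ξ hξ
    rw [MvPolynomial.mem_zeroLocus_iff] at hξ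
    set evC : (Fin n → ℝ) →ₗ[ℝ] ℂ :=
      { toFun := fun a => ∑ i2, (algebraMap ℝ ℂ (a i2)) * ξ i2
        map_add' := by
          intro a b
          simp [add_mul, Finset.sum_add_distrib]
        map_smul' := by
          intro r a
          simp [Finset.mul_sum, mul_assoc, Algebra.smul_def] } with hevC
    have heval : ∀ a, MvPolynomial.eval ξ (mapC (linP a)) = evC a := by
      intro a
      rw [linP_eq_linG, hmapC, MvPolynomial.eval_map, eval₂_linG]
      rfl
    by_cases hall : ∀ v ∈ s, evC v = 0
    · rw [heval]
      exact hall c hcs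
    · exfalso
      push_neg at hall
      obtain ⟨v0, hv0s, hv0⟩ := hall
      set W := Submodule.span ℝ {v | v ∈ Set.range X ∧ v ∈ s ∧ evC v = 0} with hW
      have hWrat : RationalSub X W := rational_span X _ (fun v hv => hv.1)
      have hWs : W ≤ s := Submodule.span_le.mpr (fun v hv => hv.2.1)
      have hWker : W ≤ LinearMap.ker evC := Submodule.span_le.mpr (fun v hv => hv.2.2)
      have hWne : W ≠ s := by
        intro heq
        exact hv0 (hWker (heq ▸ hv0s))
      have hWlt : W < s := lt_of_le_of_ne hWs hWne
      have hfr : Module.finrank ℝ W ≤ j := by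
        have := Submodule.finrank_lt_finrank_of_lt hWlt
        omega
      obtain ⟨t, htrat, hWt, hts, htr⟩ :=
        rational_extend X hX0 hs (j := j) (by omega) W hWrat hWs hfr
      have htlt : t < s := lt_of_le_of_ne hts (fun h => by rw [h] at htr; omega)
      have hdd : ddP X s t ∈ Jlow X s j :=
        span_ddP_le_Jlow X ⟨htrat, htlt, htr⟩ (Ideal.mem_span_singleton_self _)
      have hz : MvPolynomial.eval ξ (mapC (ddP X s t)) = 0 := hξ _ (Ideal.mem_map_of_mem _ hdd)
      have hz2 : (∏ i2 ∈ Finset.univ.filter (fun i2 => X i2 ∉ t ∧ X i2 ∈ s), evC (X i2)) = 0 := by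
        calc (∏ i2 ∈ Finset.univ.filter (fun i2 => X i2 ∉ t ∧ X i2 ∈ s), evC (X i2))
            = MvPolynomial.eval ξ (mapC (ddP X s t)) := by
              rw [ddP, map_prod, map_prod]
              exact (Finset.prod_congr rfl (fun i2 _ => (heval _))).symm
          _ = 0 := hz
      obtain ⟨i2, hi2mem, hi2z⟩ := Finset.prod_eq_zero_iff.mp hz2
      rw [Finset.mem_filter] at hi2mem
      exact hi2mem.2.1 (hWt (Submodule.subset_span ⟨⟨i2, rfl⟩, hi2mem.2.2, hi2z⟩))
  have hrad : mapC (linP c) ∈ JC.radical := by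
    rw [← MvPolynomial.vanishingIdeal_zeroLocus_eq_radical (K := ℂ)]
    exact MvPolynomial.mem_vanishingIdeal_iff.mpr hvan
  obtain ⟨N, hN⟩ := Ideal.mem_radical_iff.mp hrad
  refine Ideal.mem_radical_iff.mpr ⟨N, ?_⟩
  apply mem_of_mapC_mem
  rw [map_pow]
  exact hN

end Null

-- part 7: split coordinates, primality of Ps, primary-ness of Jlow
section MoreTransport

variable {R S : Type*} [CommRing R] [CommRing S]

lemma map_map_symm (e : R ≃+* S) (I : Ideal R) :
    (I.map (e : R →+* S)).map (e.symm : S →+* R) = I := by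
  ext x
  rw [mem_map_ringEquiv e.symm, mem_map_ringEquiv e]
  simp

end MoreTransport

section RenameLemmas

open MvPolynomial

variable {τ σ : Type*} [Fintype τ] [DecidableEq τ] [Fintype σ] [DecidableEq σ]

lemma rename_inr_linG (v : τ ⊕ σ → ℝ) (hv : ∀ l, v (Sum.inl l) = 0) :
    rename (Sum.inr : σ → τ ⊕ σ) (linG (fun j' => v (Sum.inr j'))) = linG v := by
  rw [linG, linG, map_sum]
  simp only [map_mul, rename_C, rename_X]
  rw [Fintype.sum_sum_type]
  simp [hv]

def piHom : MvPolynomial (τ ⊕ σ) ℝ →ₐ[ℝ] MvPolynomial σ ℝ :=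
  aeval (Sum.elim (fun _ => 0) MvPolynomial.X)

lemma piHom_rename (p : MvPolynomial σ ℝ) :
    (piHom (τ := τ)) (rename (Sum.inr : σ → τ ⊕ σ) p) = p := by
  rw [piHom, aeval_rename]
  have h : ((Sum.elim (fun _ => (0 : MvPolynomial σ ℝ)) MvPolynomial.X :
      τ ⊕ σ → MvPolynomial σ ℝ) ∘ (Sum.inr : σ → τ ⊕ σ))
      = (MvPolynomial.X : σ → MvPolynomial σ ℝ) := rfl
  rw [h]
  exact MvPolynomial.aeval_X_left_apply p

end RenameLemmas

section Split

open MvPolynomial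

variable {n m r k : ℕ} (X : Fin m → Fin n → ℝ) (s : Submodule ℝ (Fin n → ℝ))
variable (B : Module.Basis (Fin r ⊕ Fin k) ℝ (Fin n → ℝ))

def toSplitHom : MvPolynomial (Fin n) ℝ →ₐ[ℝ] MvPolynomial (Fin r ⊕ Fin k) ℝ :=
  aeval (fun i => linG ((B.equivFun.toLinearMap) (Pi.single i 1 : Fin n → ℝ)))

def fromSplitHom : MvPolynomial (Fin r ⊕ Fin k) ℝ →ₐ[ℝ] MvPolynomial (Fin n) ℝ :=
  aeval (fun u => linG ((B.equivFun.symm.toLinearMap) (Pi.single u 1 : Fin r ⊕ Fin k → ℝ)))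

lemma toSplitHom_linG (a : Fin n → ℝ) :
    toSplitHom B (linG a) = linG (B.equivFun a) :=
  aeval_linG_comp _ a

lemma fromSplitHom_linG (v : Fin r ⊕ Fin k → ℝ) :
    fromSplitHom B (linG v) = linG (B.equivFun.symm v) :=
  aeval_linG_comp _ v

def toSplit : MvPolynomial (Fin n) ℝ ≃ₐ[ℝ] MvPolynomial (Fin r ⊕ Fin k) ℝ :=
  AlgEquiv.ofAlgHom (toSplitHom B) (fromSplitHom B)
    (by
      apply MvPolynomial.algHom_ext
      intro u
      show toSplitHom B (fromSplitHom B (MvPolynomial.X u)) = MvPolynomial.X u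
      have hX : (MvPolynomial.X u : MvPolynomial (Fin r ⊕ Fin k) ℝ)
          = linG (Pi.single u 1) := by rw [linG_single, map_one, one_mul]
      rw [hX, fromSplitHom_linG, toSplitHom_linG, LinearEquiv.apply_symm_apply,
        linG_single, map_one, one_mul])
    (by
      apply MvPolynomial.algHom_ext
      intro i
      show fromSplitHom B (toSplitHom B (MvPolynomial.X i)) = MvPolynomial.X i
      have hX : (MvPolynomial.X i : MvPolynomial (Fin n) ℝ)
          = linG (Pi.single i 1) := by rw [linG_single, map_one, one_mul]
      rw [hX, toSplitHom_linG, fromSplitHom_linG, LinearEquiv.symm_apply_apply,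
        linG_single, map_one, one_mul])

def eR : MvPolynomial (Fin n) ℝ ≃+* MvPolynomial (Fin r ⊕ Fin k) ℝ :=
  (toSplit B).toRingEquiv

lemma eR_linP (a : Fin n → ℝ) :
    (eR B : MvPolynomial (Fin n) ℝ →+* MvPolynomial (Fin r ⊕ Fin k) ℝ) (linP a)
      = linG (B.equivFun a) := by
  show toSplitHom B (linP a) = _
  rw [linP_eq_linG]
  exact toSplitHom_linG B a

variable (hmem : ∀ a : Fin n → ℝ, a ∈ s ↔ ∀ l, B.equivFun a (Sum.inl l) = 0)

lemma not_inr_cases (u : Fin r ⊕ Fin k)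
    (hu : u ∉ Set.range (Sum.inr : Fin k → Fin r ⊕ Fin k)) : ∃ l, u = Sum.inl l := by
  cases u with
  | inl l => exact ⟨l, rfl⟩
  | inr j' => exact absurd ⟨j', rfl⟩ hu

include hmem in
lemma map_eR_Ps :
    (Ps s).map (eR B : MvPolynomial (Fin n) ℝ →+* MvPolynomial (Fin r ⊕ Fin k) ℝ)
      = varIdeal (Set.range (Sum.inr : Fin k → Fin r ⊕ Fin k)) := by
  apply le_antisymm
  · rw [Ps, Ideal.map_span, Ideal.span_le]
    rintro - ⟨-, ⟨a, ha, rfl⟩, rfl⟩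
    rw [SetLike.mem_coe, eR_linP, linG_mem_varIdeal_iff]
    intro u hu
    obtain ⟨l, rfl⟩ := not_inr_cases u hu
    exact (hmem a).mp ha l
  · rw [varIdeal, Ideal.span_le]
    rintro - ⟨u, ⟨j', rfl⟩, rfl⟩
    set a := B.equivFun.symm (Pi.single (Sum.inr j') 1 : Fin r ⊕ Fin k → ℝ) with ha_def
    have ha : a ∈ s := by
      refine (hmem a).mpr (fun l => ?_)
      rw [ha_def, LinearEquiv.apply_symm_apply]
      exact Pi.single_eq_of_ne (by simp) 1
    have key : (eR B : MvPolynomial (Fin n) ℝ →+* MvPolynomial (Fin r ⊕ Fin k) ℝ) (linP a)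
        = MvPolynomial.X (Sum.inr j') := by
      rw [eR_linP, ha_def, LinearEquiv.apply_symm_apply, linG_single, map_one, one_mul]
    rw [SetLike.mem_coe]
    show MvPolynomial.X (Sum.inr j') ∈ _
    rw [← key]
    exact Ideal.mem_map_of_mem _ (Ideal.subset_span ⟨a, ha, rfl⟩)

include hmem in
lemma Ps_eq_comap :
    Ps s = (varIdeal (Set.range (Sum.inr : Fin k → Fin r ⊕ Fin k))).comap
      (eR B : MvPolynomial (Fin n) ℝ →+* MvPolynomial (Fin r ⊕ Fin k) ℝ) := by
  ext x
  rw [Ideal.mem_comap, ← map_eR_Ps s B hmem]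
  constructor
  · exact fun h => Ideal.mem_map_of_mem _ h
  · intro h
    have := (mem_map_ringEquiv (eR B) (Ps s) ((eR B) x)).mp h
    simpa using this

include hmem in
lemma Ps_isPrime : (Ps s).IsPrime := by
  rw [Ps_eq_comap s B hmem]
  exact Ideal.IsPrime.comap _ (hK := varIdeal_isPrime _)

include hmem in
lemma linP_mem_Ps_iff (c : Fin n → ℝ) : linP c ∈ Ps s ↔ c ∈ s := by
  rw [Ps_eq_comap s B hmem, Ideal.mem_comap, eR_linP, linG_mem_varIdeal_iff]
  constructor
  · intro h
    exact (hmem c).mpr (fun l => h (Sum.inl l) (by simp))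
  · intro h u hu
    obtain ⟨l, rfl⟩ := not_inr_cases u hu
    exact (hmem c).mp h l

open Classical in
def qgen (t : Submodule ℝ (Fin n → ℝ)) : MvPolynomial (Fin k) ℝ :=
  ∏ i ∈ Finset.univ.filter (fun i => X i ∉ t ∧ X i ∈ s),
    linG (fun j' => B.equivFun (X i) (Sum.inr j'))

open Classical in
include hmem in
lemma eR_ddP (t : Submodule ℝ (Fin n → ℝ)) :
    (eR B : MvPolynomial (Fin n) ℝ →+* MvPolynomial (Fin r ⊕ Fin k) ℝ) (ddP X s t)
      = (rename (Sum.inr : Fin k → Fin r ⊕ Fin k)).toRingHom (qgen X s B t) := by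
  rw [ddP, qgen, map_prod, map_prod]
  apply Finset.prod_congr rfl
  intro i hi
  rw [Finset.mem_filter] at hi
  rw [eR_linP]
  exact (rename_inr_linG _ ((hmem (X i)).mp hi.2.2)).symm

include hmem in
lemma Jlow_isPrimary (hX0 : ∀ i, X i ≠ 0) (hs : RationalSub X s) {j : ℕ}
    (hdim : Module.finrank ℝ s = j + 1) : (Jlow X s j).IsPrimary := by
  classical
  set ι := ((rename (Sum.inr : Fin k → Fin r ⊕ Fin k)).toRingHom :
    MvPolynomial (Fin k) ℝ →+* MvPolynomial (Fin r ⊕ Fin k) ℝ) with hι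
  set q : Ideal (MvPolynomial (Fin k) ℝ) := ⨆ t ∈ Tlow X s j, Ideal.span {qgen X s B t}
    with hq_def
  -- the image of Jlow is the extension of q
  have hmapJ : (Jlow X s j).map
      (eR B : MvPolynomial (Fin n) ℝ →+* MvPolynomial (Fin r ⊕ Fin k) ℝ) = q.map ι := by
    rw [Jlow, hq_def, Ideal.map_iSup, Ideal.map_iSup]
    apply iSup_congr
    intro t
    rw [Ideal.map_iSup, Ideal.map_iSup]
    apply iSup_congr
    intro ht
    rw [Ideal.map_span, Ideal.map_span, Set.image_singleton, Set.image_singleton,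
      eR_ddP X s B hmem]
  -- q is contained in the maximal ideal of variables
  have hqm : q ≤ varIdeal (Set.univ : Set (Fin k)) := by
    rw [hq_def]
    apply iSup₂_le
    rintro t ⟨ht1, ht2, ht3⟩
    rw [Ideal.span_le, Set.singleton_subset_iff]
    obtain ⟨i0, hi0s, hi0t⟩ := exists_mem_notin X hs (not_le_of_gt ht2)
    have hi0mem : i0 ∈ Finset.univ.filter (fun i => X i ∉ t ∧ X i ∈ s) := by
      rw [Finset.mem_filter]
      exact ⟨Finset.mem_univ _, hi0t, hi0s⟩
    rw [SetLike.mem_coe, qgen, ← Finset.mul_prod_erase _ _ hi0mem]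
    refine Ideal.mul_mem_right _ _ ?_
    rw [linG_mem_varIdeal_iff]
    intro u hu
    exact absurd (Set.mem_univ u) hu
  -- the radical of q contains all the variables
  have hradX : ∀ j' : Fin k, (MvPolynomial.X j' : MvPolynomial (Fin k) ℝ) ∈ q.radical := by
    intro j'
    set c := B.equivFun.symm (Pi.single (Sum.inr j') 1 : Fin r ⊕ Fin k → ℝ) with hc_def
    have hcs : c ∈ s := by
      refine (hmem c).mpr (fun l => ?_)
      rw [hc_def, LinearEquiv.apply_symm_apply]
      exact Pi.single_eq_of_ne (by simp) 1
    have h1 : linP c ∈ (Jlow X s j).radical :=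
      linP_mem_radical_Jlow X hX0 hs hdim c hcs
    have h2 : (eR B : MvPolynomial (Fin n) ℝ →+* MvPolynomial (Fin r ⊕ Fin k) ℝ) (linP c)
        ∈ (q.map ι).radical := by
      rw [← hmapJ, ← map_radical_ringEquiv]
      exact Ideal.mem_map_of_mem _ h1
    have h3 : (eR B : MvPolynomial (Fin n) ℝ →+* MvPolynomial (Fin r ⊕ Fin k) ℝ) (linP c)
        = ι (MvPolynomial.X j') := by
      rw [eR_linP, hc_def, LinearEquiv.apply_symm_apply, linG_single, map_one, one_mul, hι]
      simp [rename_X]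
    rw [h3] at h2
    obtain ⟨N, hN⟩ := Ideal.mem_radical_iff.mp h2
    rw [← map_pow] at hN
    have hle : Ideal.map ι q ≤ Ideal.comap ((piHom (τ := Fin r) (σ := Fin k)).toRingHom) q := by
      apply Ideal.map_le_iff_le_comap.mpr
      intro x hx
      rw [Ideal.mem_comap, Ideal.mem_comap]
      show (piHom (τ := Fin r)) (rename Sum.inr x) ∈ q
      rw [piHom_rename]
      exact hx
    have := hle hN
    rw [Ideal.mem_comap] at this
    have heq : (piHom (τ := Fin r) (σ := Fin k)).toRingHom (ι (MvPolynomial.X j' ^ N))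
        = MvPolynomial.X j' ^ N := by
      show (piHom (τ := Fin r)) (rename Sum.inr (MvPolynomial.X j' ^ N)) = _
      rw [piHom_rename]
    rw [heq] at this
    exact Ideal.mem_radical_iff.mpr ⟨N, this⟩
  -- radical of q is the maximal ideal
  have hradq : q.radical = varIdeal (Set.univ : Set (Fin k)) := by
    apply le_antisymm
    · have h1 : q.radical ≤ (varIdeal (Set.univ : Set (Fin k))).radical :=
        Ideal.radical_mono hqm
      rwa [Ideal.IsPrime.radical ((varIdeal_univ_isMaximal).isPrime)] at h1
    · rw [varIdeal, Ideal.span_le]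
      rintro - ⟨u, -, rfl⟩
      exact hradX u
  have hqprimary : q.IsPrimary :=
    Ideal.isPrimary_of_isMaximal_radical (by rw [hradq]; exact varIdeal_univ_isMaximal)
  -- extension of q along C is primary
  have hCprimary : (q.map (MvPolynomial.C :
      MvPolynomial (Fin k) ℝ →+* MvPolynomial (Fin r) (MvPolynomial (Fin k) ℝ))).IsPrimary :=
    isPrimary_map_C hqprimary (Fin r)
  -- transfer along the sum equivalence
  set eS := (MvPolynomial.sumAlgEquiv ℝ (Fin r) (Fin k)).toRingEquiv with heS
  have hcomp : (eS : MvPolynomial (Fin r ⊕ Fin k) ℝ →+*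
      MvPolynomial (Fin r) (MvPolynomial (Fin k) ℝ)).comp ι
      = (MvPolynomial.C : MvPolynomial (Fin k) ℝ →+*
        MvPolynomial (Fin r) (MvPolynomial (Fin k) ℝ)) := by
    apply RingHom.ext
    intro p
    show (MvPolynomial.sumAlgEquiv ℝ (Fin r) (Fin k)) (rename Sum.inr p) = MvPolynomial.C p
    have h5 := AlgHom.congr_fun (MvPolynomial.sumAlgEquiv_comp_rename_inr
      (R := ℝ) (S₁ := Fin r) (S₂ := Fin k)) p
    simp only [AlgHom.coe_comp, Function.comp_apply, AlgEquiv.toAlgHom_eq_coe,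
      AlgHom.coe_coe, IsScalarTower.coe_toAlgHom'] at h5
    rw [MvPolynomial.algebraMap_eq] at h5
    exact h5
  have hmapeS : (q.map ι).map (eS : _ →+* _) = q.map (MvPolynomial.C :
      MvPolynomial (Fin k) ℝ →+* MvPolynomial (Fin r) (MvPolynomial (Fin k) ℝ)) := by
    rw [Ideal.map_map, hcomp]
  have hιprimary : (q.map ι).IsPrimary := by
    have h1 := isPrimary_map_ringEquiv eS.symm hCprimary
    rw [← hmapeS, map_map_symm] at h1
    exact h1
  -- transfer back along eR
  have h2 := isPrimary_map_ringEquiv (eR B).symm (hmapJ ▸ hιprimary :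
    ((Jlow X s j).map (eR B : MvPolynomial (Fin n) ℝ →+*
      MvPolynomial (Fin r ⊕ Fin k) ℝ)).IsPrimary)
  rwa [map_map_symm] at h2

end Split

-- part 8: adapted basis and final assembly
section Adapted

lemma prod_not_mem_prime {R : Type*} [CommRing R] {P : Ideal R} (hP : P.IsPrime)
    {ι : Type*} (F : Finset ι) (f : ι → R) (h : ∀ i ∈ F, f i ∉ P) :
    (∏ i ∈ F, f i) ∉ P := by
  refine Finset.prod_induction f (fun x => x ∉ P) ?_ ?_ h
  · intro a b ha hb hab
    rcases hP.mem_or_mem hab with h1 | h1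
    · exact ha h1
    · exact hb h1
  · show (1 : R) ∉ P
    exact (Ideal.ne_top_iff_one P).mp hP.ne_top

lemma exists_adapted_basis {n : ℕ} (s : Submodule ℝ (Fin n → ℝ)) {k : ℕ}
    (hdim : Module.finrank ℝ s = k) :
    ∃ B : Module.Basis (Fin (n - k) ⊕ Fin k) ℝ (Fin n → ℝ),
      ∀ a : Fin n → ℝ, a ∈ s ↔ ∀ l, B.equivFun a (Sum.inl l) = 0 := by
  classical
  obtain ⟨w, hw⟩ := Submodule.exists_isCompl s
  have h2 : Module.finrank ℝ (Fin n → ℝ) = n := Module.finrank_fin_fun ℝ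
  have h3 : k ≤ n := by
    have h4 := Submodule.finrank_le s
    omega
  have hfin : Module.finrank ℝ w = n - k := by
    have h1 := Submodule.finrank_add_eq_of_isCompl hw
    omega
  set bs : Module.Basis (Fin k) ℝ s := Module.finBasisOfFinrankEq ℝ s hdim with hbs
  set bw : Module.Basis (Fin (n - k)) ℝ w := Module.finBasisOfFinrankEq ℝ w hfin with hbw
  set e : (w × s) ≃ₗ[ℝ] (Fin n → ℝ) := Submodule.prodEquivOfIsCompl w s hw.symm with he
  set B : Module.Basis (Fin (n - k) ⊕ Fin k) ℝ (Fin n → ℝ) := (bw.prod bs).map e with hB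
  have hBinr : ∀ i2 : Fin k, B (Sum.inr i2) = ((bs i2 : s) : Fin n → ℝ) := by
    intro i2
    show ((bw.prod bs).map e) (Sum.inr i2) = _
    rw [Module.Basis.map_apply]
    have h4 : (bw.prod bs) (Sum.inr i2) = ((0 : w), bs i2) := by
      apply Prod.ext
      · exact Module.Basis.prod_apply_inr_fst _ _ _
      · exact Module.Basis.prod_apply_inr_snd _ _ _
    rw [h4]
    show Submodule.prodEquivOfIsCompl w s hw.symm ((0 : w), bs i2) = _
    rw [Submodule.coe_prodEquivOfIsCompl']
    simp
  refine ⟨B, fun a => ⟨?_, ?_⟩⟩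
  · intro ha l
    have hrepr := Module.Basis.sum_repr bs ⟨a, ha⟩
    have hx : a = ∑ i2, (bs.repr ⟨a, ha⟩ i2) • (((bs i2 : s) : Fin n → ℝ)) := by
      have h6 := congrArg (fun (v : s) => (v : Fin n → ℝ)) hrepr
      simp only at h6
      calc a = ((∑ i2, (bs.repr ⟨a, ha⟩ i2) • bs i2 : s) : Fin n → ℝ) := h6.symm
        _ = ∑ i2, (bs.repr ⟨a, ha⟩ i2) • (((bs i2 : s) : Fin n → ℝ)) := by
            push_cast
            rfl
    rw [hx]
    rw [map_sum]
    rw [Finset.sum_apply]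
    apply Finset.sum_eq_zero
    intro i2 _
    rw [← hBinr, map_smul]
    have h5 := Module.Basis.equivFun_self (b := B) (Sum.inr i2) (Sum.inl l)
    simp only [Pi.smul_apply]
    rw [h5]
    simp
  · intro h0
    have hsum := Module.Basis.sum_equivFun B a
    rw [← hsum, Fintype.sum_sum_type]
    apply Submodule.add_mem
    · apply Submodule.sum_mem
      intro l _
      rw [h0 l, zero_smul]
      exact Submodule.zero_mem s
    · apply Submodule.sum_mem
      intro i2 _
      rw [hBinr i2]
      exact Submodule.smul_mem s _ (Submodule.coe_mem (bs i2))

end Adapted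

end Stmt4Aux

open Stmt4Aux in
theorem stmt4 {n m : ℕ} (X : Fin m → Fin n → ℝ)
    (hX0 : ∀ i, X i ≠ 0)
    (hspan : Submodule.span ℝ (Set.range X) = ⊤)
    (s : Submodule ℝ (Fin n → ℝ)) (k : ℕ) (hk : 1 ≤ k)
    (hs : RationalSub X s) (hdim : Module.finrank ℝ s = k) :
    Isub X s ⊓ Ilev X (k - 1) =
      ⨆ t ∈ {t : Submodule ℝ (Fin n → ℝ) |
          RationalSub X t ∧ t < s ∧ Module.finrank ℝ t = k - 1},
        Isub X t := by
  classical
  obtain ⟨j, rfl⟩ : ∃ j, k = j + 1 := ⟨k - 1, by omega⟩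
  simp only [Nat.add_sub_cancel]
  have hdim' : Module.finrank ℝ s = j + 1 := hdim
  obtain ⟨B, hmem⟩ := exists_adapted_basis s hdim'
  apply le_antisymm
  · intro f hf
    rw [Submodule.mem_inf] at hf
    obtain ⟨hf1, hf2⟩ := hf
    rw [Isub_eq_span, Ideal.mem_span_singleton] at hf1
    obtain ⟨c, hc⟩ := hf1
    have hf2' : f ∈ Ilev X j := hf2
    have hfJ : f ∈ Jlow X s j := Ilev_le_Jlow X hX0 hs hdim' hf2'
    have hPrim := Jlow_isPrimary X s B hmem hX0 hs hdim'
    have hPsprime := Ps_isPrime s B hmem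
    have hdnot : dOut X s ∉ Ps s := by
      rw [dOut]
      apply prod_not_mem_prime hPsprime
      intro i hi
      rw [Finset.mem_filter] at hi
      intro hiP
      exact hi.2 ((linP_mem_Ps_iff s B hmem (X i)).mp hiP)
    rw [hc] at hfJ
    rcases (Ideal.isPrimary_iff.mp hPrim).2 (x := c) (y := dOut X s)
        (by rwa [mul_comm]) with h1 | h1
    · -- c ∈ Jlow : conclude
      have hkey : ∀ x ∈ Jlow X s j, dOut X s * x ∈
          ⨆ t ∈ {t : Submodule ℝ (Fin n → ℝ) |
            RationalSub X t ∧ t < s ∧ Module.finrank ℝ t = j}, Isub X t := by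
        intro x hx
        rw [Jlow, iSup_subtype'] at hx
        refine Submodule.iSup_induction _ (motive := fun x => dOut X s * x ∈
          ⨆ t ∈ {t : Submodule ℝ (Fin n → ℝ) |
            RationalSub X t ∧ t < s ∧ Module.finrank ℝ t = j}, Isub X t) hx ?_ ?_ ?_
        · rintro ⟨t, htT⟩ y hy
          rw [Ideal.mem_span_singleton] at hy
          obtain ⟨h, rfl⟩ := hy
          have heq : dOut X s * (ddP X s t * h) = dOut X t * h := by
            rw [dOut_eq_of_le X (le_of_lt htT.2.1)]
            ring
          rw [heq]
          have hm : dOut X t * h ∈ Isub X t := by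
            rw [Isub_eq_span]
            exact Ideal.mul_mem_right _ _ (Ideal.mem_span_singleton_self _)
          have hle : Isub X t ≤ ⨆ t ∈ {t : Submodule ℝ (Fin n → ℝ) |
              RationalSub X t ∧ t < s ∧ Module.finrank ℝ t = j}, Isub X t :=
            le_iSup₂ (f := fun W _ => Isub X W) t ⟨htT.1, htT.2.1, htT.2.2⟩
          exact hle hm
        · show dOut X s * 0 ∈ _
          rw [mul_zero]
          exact zero_mem _
        · intro y z hy hz
          show dOut X s * (y + z) ∈ _
          rw [mul_add]
          exact add_mem hy hz
      rw [hc]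
      exact hkey c h1
    · exfalso
      apply hdnot
      have hle2 : (Jlow X s j).radical ≤ Ps s := by
        have h4 := Ideal.radical_mono (Jlow_le_Ps X hs (j := j))
        rwa [Ideal.IsPrime.radical hPsprime] at h4
      exact hle2 h1
  · apply iSup₂_le
    rintro t ⟨ht1, ht2, ht3⟩
    apply le_inf
    · rw [Isub_eq_span, Isub_eq_span, Ideal.span_singleton_le_span_singleton]
      exact ⟨ddP X s t, by rw [dOut_eq_of_le X (le_of_lt ht2), mul_comm]⟩
    · have : Isub X t ≤ Ilev X j := by
        rw [Ilev]
        exact le_iSup₂ (f := fun W _ => Isub X W) t ⟨ht1, ht3⟩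
      exact this
end
end

section
/- Let Q be an admissible set of rational subspaces (i.e. closed under taking rational subspaces contained in a member), and let s̲ ∈ Q be of maximal dimension k. Then I_{s̲} ∩ I_{Q∖{s̲}} = I_{s̲} ∩ I_{k-1} = Σ_{t̲ ⊂ s̲, t̲ ∈ S_X(k-1)} I_{t̲}. -/
/-!
STATEMENT 5: Let Q be an admissible set of rational subspaces (closed under
taking rational subspaces contained in a member) and let s̲ ∈ Q be of maximal
dimension k.  Then
I_{s̲} ∩ I_{Q∖{s̲}} = I_{s̲} ∩ I_{k-1} = Σ_{t̲ ⊂ s̲, t̲ ∈ S_X(k-1)} I_{t̲}.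
-/

noncomputable section

open scoped BigOperators

/-- I_Q = Σ_{s̲ ∈ Q} I_{s̲}. -/
def IQ {n m : ℕ} (X : Fin m → Fin n → ℝ) (Q : Set (Submodule ℝ (Fin n → ℝ))) :
    Ideal (MvPolynomial (Fin n) ℝ) :=
  ⨆ W ∈ Q, Isub X W

/-- Q is admissible: every rational subspace contained in a member of Q
belongs to Q. -/
def Admissible {n m : ℕ} (X : Fin m → Fin n → ℝ)
    (Q : Set (Submodule ℝ (Fin n → ℝ))) : Prop :=
  (∀ W ∈ Q, RationalSub X W) ∧
  ∀ W ∈ Q, ∀ t : Submodule ℝ (Fin n → ℝ), RationalSub X t → t ≤ W → t ∈ Q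

namespace Stmt5Aux

open MvPolynomial

variable {n m : ℕ}

open Classical in
def dsub (X : Fin m → Fin n → ℝ) (W : Submodule ℝ (Fin n → ℝ)) : MvPolynomial (Fin n) ℝ :=
  ∏ i ∈ Finset.univ.filter (fun i => X i ∉ W), linP (X i)

open Classical in
def esub (X : Fin m → Fin n → ℝ) (s t : Submodule ℝ (Fin n → ℝ)) : MvPolynomial (Fin n) ℝ :=
  ∏ i ∈ Finset.univ.filter (fun i => X i ∈ s ∧ X i ∉ t), linP (X i)

lemma Isub_eq (X : Fin m → Fin n → ℝ) (W : Submodule ℝ (Fin n → ℝ)) :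
    Isub X W = Ideal.span {dsub X W} := rfl

open Classical in
lemma dsub_eq_mul {X : Fin m → Fin n → ℝ} {t s : Submodule ℝ (Fin n → ℝ)} (h : t ≤ s) :
    dsub X t = dsub X s * esub X s t := by
  rw [dsub, ← Finset.prod_filter_mul_prod_filter_not
      (Finset.univ.filter fun i => X i ∉ t) (fun i => X i ∉ s)]
  congr 1
  · apply Finset.prod_congr _ fun _ _ => rfl
    ext i
    simp only [Finset.mem_filter, Finset.mem_univ, true_and]
    exact ⟨fun hi => hi.2, fun hi => ⟨fun hit => hi (h hit), hi⟩⟩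
  · apply Finset.prod_congr _ fun _ _ => rfl
    ext i
    simp only [Finset.mem_filter, Finset.mem_univ, true_and, not_not]
    exact ⟨fun hi => ⟨hi.2, hi.1⟩, fun hi => ⟨hi.2, hi.1⟩⟩

lemma Isub_mono {X : Fin m → Fin n → ℝ} {t s : Submodule ℝ (Fin n → ℝ)} (h : t ≤ s) :
    Isub X t ≤ Isub X s := by
  rw [Isub_eq, Isub_eq]
  exact Ideal.span_singleton_le_span_singleton.mpr ⟨esub X s t, dsub_eq_mul h⟩

/-- substitution x_j ↦ x_j + c_j T -/
def theta (c : Fin n → ℝ) :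
    MvPolynomial (Fin n) ℝ →ₐ[ℝ] Polynomial (MvPolynomial (Fin n) ℝ) :=
  MvPolynomial.aeval fun j =>
    Polynomial.C (MvPolynomial.X j) + Polynomial.C (MvPolynomial.C (c j)) * Polynomial.X

lemma theta_X (c : Fin n → ℝ) (j : Fin n) :
    theta c (MvPolynomial.X j)
      = Polynomial.C (MvPolynomial.X j) + Polynomial.C (MvPolynomial.C (c j)) * Polynomial.X := by
  simp [theta]

lemma theta_C (c : Fin n → ℝ) (a : ℝ) :
    theta c (MvPolynomial.C a) = Polynomial.C (MvPolynomial.C a) := by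
  simp [theta, algebraMap_eq, Polynomial.algebraMap_apply]

lemma theta_linP (c w : Fin n → ℝ) :
    theta c (linP w) = Polynomial.C (linP w)
      + Polynomial.C (MvPolynomial.C (∑ j, w j * c j)) * Polynomial.X := by
  have h : ∀ j : Fin n, theta c (MvPolynomial.C (w j) * MvPolynomial.X j)
      = Polynomial.C (MvPolynomial.C (w j) * MvPolynomial.X j)
        + Polynomial.C (MvPolynomial.C (w j * c j)) * Polynomial.X := by
    intro j
    rw [map_mul, theta_C, theta_X, mul_add, map_mul, map_mul, map_mul]
    ring
  simp only [linP]
  rw [map_sum, Finset.sum_congr rfl fun j _ => h j, Finset.sum_add_distrib]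
  congr 1
  · rw [← map_sum]
  · rw [← Finset.sum_mul, ← map_sum, ← map_sum]

lemma theta_coeff_zero (c : Fin n → ℝ) (p : MvPolynomial (Fin n) ℝ) :
    (theta c p).coeff 0 = p := by
  induction p using MvPolynomial.induction_on with
  | C a => rw [theta_C, Polynomial.coeff_C_zero]
  | add p q hp hq => rw [map_add, Polynomial.coeff_add, hp, hq]
  | mul_X p j hp =>
      rw [map_mul, Polynomial.mul_coeff_zero, hp, theta_X]
      simp

lemma nzd {G : Set (MvPolynomial (Fin n) ℝ)} {c v : Fin n → ℝ}
    (hG : ∀ g ∈ G, theta c g = Polynomial.C g) (hv : ∑ j, v j * c j = 1)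
    {h : MvPolynomial (Fin n) ℝ} (hmem : linP v * h ∈ Ideal.span G) :
    h ∈ Ideal.span G := by
  have hθE : ∀ p ∈ Ideal.span G,
      theta c p ∈ Ideal.map (Polynomial.C (R := MvPolynomial (Fin n) ℝ)) (Ideal.span G) := by
    intro p hp
    refine Submodule.span_induction ?_ ?_ ?_ ?_ hp
    · intro g hg
      rw [hG g hg]
      exact Ideal.mem_map_of_mem _ (Ideal.subset_span hg)
    · rw [map_zero]; exact zero_mem _
    · intro a b _ _ ha hb; rw [map_add]; exact add_mem ha hb
    · intro r a _ ha; rw [smul_eq_mul, map_mul]; exact Ideal.mul_mem_left _ _ ha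
  have h1 := hθE _ hmem
  rw [map_mul, theta_linP, hv, map_one, map_one, one_mul] at h1
  set F := theta c h with hF
  have hco : ∀ d, ((Polynomial.C (linP v) + Polynomial.X) * F).coeff d ∈ Ideal.span G :=
    fun d => Ideal.mem_map_C_iff.mp h1 d
  have key : ∀ jj d, F.natDegree < d + jj → F.coeff d ∈ Ideal.span G := by
    intro jj
    induction jj with
    | zero =>
        intro d hd
        rw [Polynomial.coeff_eq_zero_of_natDegree_lt (by omega)]
        exact zero_mem _
    | succ j ih =>
        intro d hd
        have h2 := hco (d + 1)
        have h3 : F.coeff (d + 1) ∈ Ideal.span G := ih (d + 1) (by omega)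
        have h4 : ((Polynomial.C (linP v) + Polynomial.X) * F).coeff (d + 1)
            = linP v * F.coeff (d + 1) + F.coeff d := by
          rw [add_mul, Polynomial.coeff_add, Polynomial.coeff_C_mul, Polynomial.coeff_X_mul]
        have h5 : F.coeff d = ((Polynomial.C (linP v) + Polynomial.X) * F).coeff (d + 1)
            - linP v * F.coeff (d + 1) := by rw [h4]; ring
        rw [h5]
        exact sub_mem h2 (Ideal.mul_mem_left _ _ h3)
  have hfin := key (F.natDegree + 1) 0 (by omega)
  rwa [hF, theta_coeff_zero] at hfin

lemma exists_perp {s : Submodule ℝ (Fin n → ℝ)} {v : Fin n → ℝ} (hv : v ∉ s) :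
    ∃ c : Fin n → ℝ, (∀ w ∈ s, ∑ j, w j * c j = 0) ∧ ∑ j, v j * c j = 1 := by
  obtain ⟨f, hf0, hfmap⟩ := Submodule.exists_dual_map_eq_bot_of_notMem hv inferInstance
  have hkey : ∀ w : Fin n → ℝ,
      ∑ j, w j * f (fun j' => if j = j' then 1 else 0) = f w := by
    intro w
    conv_rhs => rw [pi_eq_sum_univ w]
    rw [map_sum]
    refine Finset.sum_congr rfl fun j _ => ?_
    rw [map_smul, smul_eq_mul]
  refine ⟨fun j => f (fun j' => if j = j' then 1 else 0) * (f v)⁻¹, ?_, ?_⟩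
  · intro w hw
    have hfw : f w = 0 := by
      have : f w ∈ s.map f := ⟨w, hw, rfl⟩
      rwa [hfmap, Submodule.mem_bot] at this
    calc ∑ j, w j * (f (fun j' => if j = j' then 1 else 0) * (f v)⁻¹)
        = (∑ j, w j * f (fun j' => if j = j' then 1 else 0)) * (f v)⁻¹ := by
          rw [Finset.sum_mul]; exact Finset.sum_congr rfl fun j _ => (mul_assoc _ _ _).symm
      _ = f w * (f v)⁻¹ := by rw [hkey]
      _ = 0 := by rw [hfw, zero_mul]
  · calc ∑ j, v j * (f (fun j' => if j = j' then 1 else 0) * (f v)⁻¹)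
        = (∑ j, v j * f (fun j' => if j = j' then 1 else 0)) * (f v)⁻¹ := by
          rw [Finset.sum_mul]; exact Finset.sum_congr rfl fun j _ => (mul_assoc _ _ _).symm
      _ = f v * (f v)⁻¹ := by rw [hkey]
      _ = 1 := mul_inv_cancel₀ hf0

open Classical in
lemma theta_esub {X : Fin m → Fin n → ℝ} {s t : Submodule ℝ (Fin n → ℝ)}
    {c : Fin n → ℝ} (hc : ∀ w ∈ s, ∑ j, w j * c j = 0) :
    theta c (esub X s t) = Polynomial.C (esub X s t) := by
  rw [esub, map_prod]
  have h : ∀ i ∈ Finset.univ.filter (fun i => X i ∈ s ∧ X i ∉ t),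
      theta c (linP (X i)) = Polynomial.C (linP (X i)) := by
    intro i hi
    have his : X i ∈ s := (Finset.mem_filter.mp hi).2.1
    rw [theta_linP, hc (X i) his]
    simp
  rw [Finset.prod_congr rfl h, ← map_prod]

lemma prod_nzd {X : Fin m → Fin n → ℝ} {s : Submodule ℝ (Fin n → ℝ)}
    {G : Set (MvPolynomial (Fin n) ℝ)}
    (hG : ∀ c : Fin n → ℝ, (∀ w ∈ s, ∑ j, w j * c j = 0) →
      ∀ g ∈ G, theta c g = Polynomial.C g) :
    ∀ A : Finset (Fin m), (∀ i ∈ A, X i ∉ s) →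
      ∀ h : MvPolynomial (Fin n) ℝ,
        (∏ i ∈ A, linP (X i)) * h ∈ Ideal.span G → h ∈ Ideal.span G := by
  intro A
  induction A using Finset.induction_on with
  | empty => intro _ h hh; simpa using hh
  | insert _ _ hnotmem =>
      rename_i a A ih
      intro hA h hh
      rw [Finset.prod_insert hnotmem, mul_assoc] at hh
      obtain ⟨c, hc0, hc1⟩ := exists_perp (hA a (Finset.mem_insert_self a A))
      exact ih (fun i hi => hA i (Finset.mem_insert_of_mem hi)) h (nzd (hG c hc0) hc1 hh)

lemma enlarge {X : Fin m → Fin n → ℝ} (hX0 : ∀ i, X i ≠ 0)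
    {s : Submodule ℝ (Fin n → ℝ)} (hs : RationalSub X s) :
    ∀ (j : ℕ) (t : Submodule ℝ (Fin n → ℝ)), RationalSub X t → t < s →
      Module.finrank ℝ s - 1 - Module.finrank ℝ t ≤ j →
      ∃ t', RationalSub X t' ∧ t ≤ t' ∧ t' < s ∧
        Module.finrank ℝ t' = Module.finrank ℝ s - 1 := by
  intro j
  induction j with
  | zero =>
      intro t hrat hts hj
      have h1 : Module.finrank ℝ t < Module.finrank ℝ s :=
        Submodule.finrank_lt_finrank_of_lt hts
      exact ⟨t, hrat, le_rfl, hts, by omega⟩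
  | succ j ih =>
      intro t hrat hts hj
      by_cases hd : Module.finrank ℝ t = Module.finrank ℝ s - 1
      · exact ⟨t, hrat, le_rfl, hts, hd⟩
      have h1 : Module.finrank ℝ t < Module.finrank ℝ s :=
        Submodule.finrank_lt_finrank_of_lt hts
      have hx : ∃ x, x ∈ Set.range X ∩ (s : Set (Fin n → ℝ)) ∧ x ∉ t := by
        by_contra hcon
        push_neg at hcon
        have hst : s ≤ t := by
          conv_lhs => rw [hs]
          exact Submodule.span_le.mpr hcon
        exact absurd (lt_of_lt_of_le hts hst) (lt_irrefl t)
      obtain ⟨x, hxX, hxt⟩ := hx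
      have hx0 : x ≠ 0 := by
        obtain ⟨i, rfl⟩ := hxX.1
        exact hX0 i
      have hinf : t ⊓ Submodule.span ℝ {x} = ⊥ := by
        rw [← disjoint_iff]
        exact (Submodule.disjoint_span_singleton' hx0).mpr hxt
      have hrk : Module.finrank ℝ (t ⊔ Submodule.span ℝ {x} : Submodule ℝ (Fin n → ℝ))
          = Module.finrank ℝ t + 1 := by
        have hh := Submodule.finrank_sup_add_finrank_inf_eq t (Submodule.span ℝ {x})
        rw [hinf, finrank_bot, finrank_span_singleton hx0] at hh
        omega
      have ht's : t ⊔ Submodule.span ℝ {x} ≤ s := sup_le hts.le (Submodule.span_le.mpr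
        (Set.singleton_subset_iff.mpr hxX.2))
      have ht'lt : t ⊔ Submodule.span ℝ {x} < s := by
        refine lt_of_le_of_ne ht's fun he => ?_
        rw [he] at hrk
        omega
      have hratt' : RationalSub X (t ⊔ Submodule.span ℝ {x}) := by
        refine le_antisymm ?_ (Submodule.span_le.mpr fun y hy => hy.2)
        have he : t ⊔ Submodule.span ℝ {x}
            = Submodule.span ℝ ((Set.range X ∩ (t : Set (Fin n → ℝ))) ∪ {x}) := by
          rw [Submodule.span_union, ← hrat]
        conv_lhs => rw [he]
        apply Submodule.span_le.mpr
        rintro y (⟨hy1, hy2⟩ | rfl)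
        · exact Submodule.subset_span ⟨hy1, Submodule.mem_sup_left hy2⟩
        · exact Submodule.subset_span
            ⟨hxX.1, Submodule.mem_sup_right (Submodule.subset_span rfl)⟩
      obtain ⟨t'', hrat'', hle'', hlt'', hrk''⟩ :=
        ih (t ⊔ Submodule.span ℝ {x}) hratt' ht'lt (by omega)
      exact ⟨t'', hrat'', le_trans le_sup_left hle'', hlt'', hrk''⟩

open Classical in
lemma main {X : Fin m → Fin n → ℝ} (hX0 : ∀ i, X i ≠ 0)
    {s : Submodule ℝ (Fin n → ℝ)} (hs : RationalSub X s)
    (𝒲 : Set (Submodule ℝ (Fin n → ℝ))) (h𝒲 : ∀ W ∈ 𝒲, ¬ s ≤ W) :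
    Isub X s ⊓ (⨆ W ∈ 𝒲, Isub X W) ≤
      ⨆ t ∈ {t : Submodule ℝ (Fin n → ℝ) |
          RationalSub X t ∧ t < s ∧ Module.finrank ℝ t = Module.finrank ℝ s - 1},
        Isub X t := by
  set T : Set (Submodule ℝ (Fin n → ℝ)) := {t | RationalSub X t ∧ t < s} with hT
  set G : Set (MvPolynomial (Fin n) ℝ) := (fun t => esub X s t) '' T with hGdef
  set E : Ideal (MvPolynomial (Fin n) ℝ) := Ideal.span G with hE
  -- step a : each I_W is inside E
  have stepa : ∀ W : Submodule ℝ (Fin n → ℝ), ¬ s ≤ W → Isub X W ≤ E := by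
    intro W hW
    set t : Submodule ℝ (Fin n → ℝ) :=
      Submodule.span ℝ (Set.range X ∩ ((W ⊓ s : Submodule ℝ (Fin n → ℝ)) : Set (Fin n → ℝ)))
      with htdef
    have htWs : t ≤ W ⊓ s := Submodule.span_le.mpr Set.inter_subset_right
    have hrat : RationalSub X t := by
      refine le_antisymm ?_ (Submodule.span_le.mpr fun y hy => hy.2)
      rw [htdef]
      exact Submodule.span_mono fun y hy => ⟨hy.1, Submodule.subset_span hy⟩
    have hts : t < s := by
      refine lt_of_le_of_ne (htWs.trans inf_le_right) fun he => ?_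
      exact hW (he ▸ htWs.trans inf_le_left)
    have hdvd : esub X s t ∣ dsub X W := by
      refine ⟨(∏ i ∈ Finset.univ.filter (fun i => X i ∉ W ∧ X i ∉ s), linP (X i)), ?_⟩
      rw [dsub, ← Finset.prod_filter_mul_prod_filter_not
          (Finset.univ.filter fun i => X i ∉ W) (fun i => X i ∈ s)]
      congr 1
      · apply Finset.prod_congr _ fun _ _ => rfl
        ext i
        simp only [Finset.mem_filter, Finset.mem_univ, true_and]
        constructor
        · rintro ⟨hiW, his⟩
          exact ⟨his, fun hit => hiW ((htWs hit).1)⟩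
        · rintro ⟨his, hit⟩
          refine ⟨fun hiW => hit ?_, his⟩
          exact Submodule.subset_span ⟨Set.mem_range_self i, hiW, his⟩
      · apply Finset.prod_congr _ fun _ _ => rfl
        ext i
        simp only [Finset.mem_filter, Finset.mem_univ, true_and]
    calc Isub X W = Ideal.span {dsub X W} := Isub_eq X W
      _ ≤ Ideal.span {esub X s t} := Ideal.span_singleton_le_span_singleton.mpr hdvd
      _ ≤ E := Ideal.span_mono (Set.singleton_subset_iff.mpr ⟨t, ⟨hrat, hts⟩, rfl⟩)
  -- step b : I_s ⊓ E ≤ ⨆_{t ∈ T} I_t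
  have hGtheta : ∀ c : Fin n → ℝ, (∀ w ∈ s, ∑ j, w j * c j = 0) →
      ∀ g ∈ G, theta c g = Polynomial.C g := by
    rintro c hc g ⟨t, _, rfl⟩
    exact theta_esub hc
  have stepb : Isub X s ⊓ E ≤ ⨆ t ∈ T, Isub X t := by
    rintro f ⟨hf1, hf2⟩
    rw [Isub_eq] at hf1
    obtain ⟨a, ha⟩ := Ideal.mem_span_singleton'.mp hf1
    have hprod : (∏ i ∈ Finset.univ.filter (fun i => X i ∉ s), linP (X i)) * a ∈ E := by
      rw [mul_comm]
      show a * dsub X s ∈ E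
      rw [ha]
      exact hf2
    have haE : a ∈ E :=
      prod_nzd hGtheta _ (fun i hi => (Finset.mem_filter.mp hi).2) a hprod
    have final : ∀ b ∈ E, b * dsub X s ∈ ⨆ t ∈ T, Isub X t := by
      intro b hb
      refine Submodule.span_induction ?_ ?_ ?_ ?_ hb
      · rintro g ⟨t, ⟨hrat, hts⟩, rfl⟩
        have hmul : esub X s t * dsub X s = dsub X t := by
          rw [mul_comm]; exact (dsub_eq_mul hts.le).symm
        rw [hmul]
        have h1 : Isub X t ≤ ⨆ t ∈ T, Isub X t :=
          le_iSup₂ (f := fun t _ => Isub X t) t ⟨hrat, hts⟩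
        exact h1 (Isub_eq X t ▸ Ideal.subset_span rfl)
      · rw [zero_mul]; exact zero_mem _
      · intro x y _ _ hx hy; rw [add_mul]; exact add_mem hx hy
      · intro r x _ hx
        rw [smul_eq_mul, mul_assoc]
        exact Ideal.mul_mem_left _ _ hx
    rw [← ha]
    exact final a haE
  -- step c : enlarge
  have stepc : (⨆ t ∈ T, Isub X t) ≤
      ⨆ t ∈ {t : Submodule ℝ (Fin n → ℝ) |
          RationalSub X t ∧ t < s ∧ Module.finrank ℝ t = Module.finrank ℝ s - 1},
        Isub X t := by
    refine iSup₂_le fun t ht => ?_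
    obtain ⟨t', hrat', htt', ht's, hrk'⟩ :=
      enlarge hX0 hs (Module.finrank ℝ s - 1 - Module.finrank ℝ t) t ht.1 ht.2 le_rfl
    exact (Isub_mono htt').trans
      (le_iSup₂ (f := fun t _ => Isub X t) t' ⟨hrat', ht's, hrk'⟩)
  refine le_trans ?_ (stepb.trans stepc)
  exact inf_le_inf_left _ (iSup₂_le fun W hW => stepa W (h𝒲 W hW))

end Stmt5Aux

theorem stmt5 {n m : ℕ} (X : Fin m → Fin n → ℝ)
    (hX0 : ∀ i, X i ≠ 0)
    (hspan : Submodule.span ℝ (Set.range X) = ⊤)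
    (Q : Set (Submodule ℝ (Fin n → ℝ))) (hQ : Admissible X Q)
    (s : Submodule ℝ (Fin n → ℝ)) (hsQ : s ∈ Q)
    (k : ℕ) (hk : 1 ≤ k) (hdim : Module.finrank ℝ s = k)
    (hmax : ∀ t ∈ Q, Module.finrank ℝ t ≤ k) :
    Isub X s ⊓ IQ X (Q \ {s}) = Isub X s ⊓ Ilev X (k - 1) ∧
    Isub X s ⊓ Ilev X (k - 1) =
      ⨆ t ∈ {t : Submodule ℝ (Fin n → ℝ) |
          RationalSub X t ∧ t < s ∧ Module.finrank ℝ t = k - 1},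
        Isub X t := by
  have hsrat : RationalSub X s := hQ.1 s hsQ
  set P : Set (Submodule ℝ (Fin n → ℝ)) :=
    {t | RationalSub X t ∧ t < s ∧ Module.finrank ℝ t = k - 1} with hP
  have hPeq : P = {t : Submodule ℝ (Fin n → ℝ) |
      RationalSub X t ∧ t < s ∧ Module.finrank ℝ t = Module.finrank ℝ s - 1} := by
    rw [hdim]
  set RHS : Ideal (MvPolynomial (Fin n) ℝ) := ⨆ t ∈ P, Isub X t with hRHS
  have hRHS_le_Is : RHS ≤ Isub X s :=
    iSup₂_le fun t ht => Stmt5Aux.Isub_mono ht.2.1.le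
  have hRHS_le_lev : RHS ≤ Ilev X (k - 1) :=
    iSup₂_le fun t ht =>
      le_iSup₂ (f := fun W (_ : W ∈ {W : Submodule ℝ (Fin n → ℝ) |
        RationalSub X W ∧ Module.finrank ℝ W = k - 1}) => Isub X W) t ⟨ht.1, ht.2.2⟩
  have hRHS_le_IQ : RHS ≤ IQ X (Q \ {s}) := by
    refine iSup₂_le fun t ht => ?_
    have htQ : t ∈ Q := hQ.2 s hsQ t ht.1 ht.2.1.le
    have htne : t ≠ s := ht.2.1.ne
    exact le_iSup₂ (f := fun W (_ : W ∈ Q \ {s}) => Isub X W) t ⟨htQ, htne⟩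
  have h1 : Isub X s ⊓ IQ X (Q \ {s}) ≤ RHS := by
    have := Stmt5Aux.main hX0 hsrat (Q \ {s}) ?_
    · rw [hRHS, hPeq]; exact this
    · rintro W ⟨hWQ, hWne⟩ hle
      have : s = W := Submodule.eq_of_le_of_finrank_le hle (by rw [hdim]; exact hmax W hWQ)
      exact hWne (by rw [← this]; rfl)
  have h2 : Isub X s ⊓ Ilev X (k - 1) ≤ RHS := by
    have := Stmt5Aux.main hX0 hsrat
      {W : Submodule ℝ (Fin n → ℝ) | RationalSub X W ∧ Module.finrank ℝ W = k - 1} ?_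
    · rw [hRHS, hPeq]; exact this
    · rintro W ⟨_, hWrk⟩ hle
      have : Module.finrank ℝ s ≤ Module.finrank ℝ W := Submodule.finrank_mono hle
      omega
  constructor
  · refine le_antisymm (h1.trans (le_inf hRHS_le_Is hRHS_le_lev))
      (h2.trans (le_inf hRHS_le_Is hRHS_le_IQ))
  · exact le_antisymm h2 (le_inf hRHS_le_Is hRHS_le_lev)

end
end

section
/- D(X) is the graded dual vector space of the finite-dimensional graded algebra D*(X) = S[g*]/I_X, under the pairing ⟨p, f⟩ = (p(∂)f)(0) for p ∈ S[g*] and f ∈ D(X); i.e. the pairing S[g*] × D(X) → ℝ descends to a perfect pairing (S[g*]/I_X) × D(X) → ℝ. -/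
/-!
STATEMENT 9: D(X) is the graded dual of the finite-dimensional algebra
D*(X) = S[g*]/I_X under the pairing ⟨p, f⟩ = (p(∂) f)(0): the pairing
S[g*] × D(X) → ℝ descends to a perfect pairing (S[g*]/I_X) × D(X) → ℝ.
-/

noncomputable section

open scoped BigOperators
open MvPolynomial

def dP {n m : ℕ} (X : Fin m → Fin n → ℝ) (S : Finset (Fin m)) :
    MvPolynomial (Fin n) ℝ :=
  ∏ i ∈ S, linP (X i)

def pdirD {n : ℕ} (a : Fin n → ℝ) : Module.End ℝ (MvPolynomial (Fin n) ℝ) :=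
  ∑ i, a i • (MvPolynomial.pderiv i).toLinearMap

def piterD {n m : ℕ} (X : Fin m → Fin n → ℝ) (S : Finset (Fin m)) :
    Module.End ℝ (MvPolynomial (Fin n) ℝ) :=
  (S.toList.map fun i => pdirD (X i)).prod

open Classical in
def IsCocircuit {n m : ℕ} (X : Fin m → Fin n → ℝ) (S : Finset (Fin m)) : Prop :=
  ∃ H : Submodule ℝ (Fin n → ℝ), RationalSub X H ∧
    Module.finrank ℝ H + 1 = n ∧ S = Finset.univ.filter (fun i => X i ∉ H)

/-- The space D(X) of polynomial solutions of the cocircuit equations. -/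
def Dspace {n m : ℕ} (X : Fin m → Fin n → ℝ) :
    Submodule ℝ (MvPolynomial (Fin n) ℝ) :=
  ⨅ S ∈ {S : Finset (Fin m) | IsCocircuit X S}, LinearMap.ker (piterD X S)

/-- The cocircuit ideal I_X. -/
def IX {n m : ℕ} (X : Fin m → Fin n → ℝ) : Ideal (MvPolynomial (Fin n) ℝ) :=
  Ideal.span {p | ∃ S : Finset (Fin m), IsCocircuit X S ∧ p = dP X S}

/-- The constant-coefficient differential operator p(∂) attached to a
polynomial p: each monomial x^d is sent to ∏ᵢ ∂ᵢ^{dᵢ}. -/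
def polyOp {n : ℕ} (p : MvPolynomial (Fin n) ℝ) :
    Module.End ℝ (MvPolynomial (Fin n) ℝ) :=
  (AddMonoidAlgebra.coeff p).sum fun d c => c •
    (List.ofFn fun i : Fin n =>
      ((MvPolynomial.pderiv i).toLinearMap :
        Module.End ℝ (MvPolynomial (Fin n) ℝ)) ^ (d i)).prod

/-- The pairing ⟨p, f⟩ = (p(∂) f)(0). -/
def pairing {n : ℕ} (p f : MvPolynomial (Fin n) ℝ) : ℝ :=
  MvPolynomial.eval (0 : Fin n → ℝ) (polyOp p f)




section ListLemmas
variable {M : Type*} [Monoid M]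

lemma ofFn_prod_pow_add : ∀ {n : ℕ} (P : Fin n → M),
    (∀ i j, Commute (P i) (P j)) → ∀ (d e : Fin n → ℕ),
    (List.ofFn fun i => P i ^ (d i + e i)).prod =
      (List.ofFn fun i => P i ^ d i).prod * (List.ofFn fun i => P i ^ e i).prod := by
  intro n
  induction n with
  | zero => intro P h d e; simp
  | succ n ih =>
    intro P h d e
    simp only [List.ofFn_succ, List.prod_cons]
    rw [ih (fun i => P i.succ) (fun i j => h _ _) (fun i => d i.succ) (fun i => e i.succ)]
    rw [pow_add]
    have hcomm : Commute (P 0 ^ e 0)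
        ((List.ofFn fun i : Fin n => P i.succ ^ d i.succ).prod) := by
      apply Commute.list_prod_right
      intro y hy
      rw [List.mem_ofFn] at hy
      obtain ⟨i, rfl⟩ := hy
      exact (h 0 i.succ).pow_pow _ _
    rw [mul_assoc (P 0 ^ d 0), ← mul_assoc (P 0 ^ e 0), hcomm.eq,
      mul_assoc ((List.ofFn fun i : Fin n => P i.succ ^ d i.succ).prod)]
    exact (mul_assoc _ _ _).symm

lemma ofFn_prod_eq_single : ∀ {n : ℕ} (g : Fin n → M) (i : Fin n),
    (∀ j, j ≠ i → g j = 1) → (List.ofFn g).prod = g i := by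
  intro n
  induction n with
  | zero => exact fun g i _ => i.elim0
  | succ n ih =>
    intro g i hg
    simp only [List.ofFn_succ, List.prod_cons]
    rcases Fin.eq_zero_or_eq_succ i with rfl | ⟨j, rfl⟩
    · have : (List.ofFn fun k : Fin n => g k.succ).prod = 1 := by
        apply List.prod_eq_one
        intro y hy
        rw [List.mem_ofFn] at hy
        obtain ⟨k, rfl⟩ := hy
        exact hg k.succ (Fin.succ_ne_zero k)
      rw [this, mul_one]
    · rw [hg 0 (Fin.succ_ne_zero j).symm, one_mul]
      exact ih (fun k => g k.succ) j fun k hk => hg k.succ (by simpa using hk)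

end ListLemmas

variable {n : ℕ}

local notation "S" => MvPolynomial (Fin n) ℝ

/-- the i-th partial derivative as an endomorphism -/
abbrev Dop (i : Fin n) : Module.End ℝ S := (MvPolynomial.pderiv i).toLinearMap

lemma pderiv_comm' (i j : Fin n) (f : S) :
    MvPolynomial.pderiv i (MvPolynomial.pderiv j f) =
      MvPolynomial.pderiv j (MvPolynomial.pderiv i f) := by
  induction f using MvPolynomial.induction_on' with
  | monomial s a =>
    rcases eq_or_ne i j with rfl | hij
    · rfl
    · simp only [pderiv_monomial]
      have h1 : s - Finsupp.single j 1 - Finsupp.single i 1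
          = s - Finsupp.single i 1 - Finsupp.single j 1 := tsub_right_comm
      have h2 : (s - Finsupp.single j 1 : Fin n →₀ ℕ) i = s i := by
        rw [Finsupp.tsub_apply, Finsupp.single_eq_of_ne' (fun h => hij h.symm)]
        rfl
      have h3 : (s - Finsupp.single i 1 : Fin n →₀ ℕ) j = s j := by
        rw [Finsupp.tsub_apply, Finsupp.single_eq_of_ne' hij]
        rfl
      rw [h1, h2, h3]
      ring_nf
  | add p q hp hq => simp [map_add, hp, hq]

lemma Dop_commute (i j : Fin n) : Commute (Dop i) (Dop j) := by
  apply LinearMap.ext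
  intro f
  exact pderiv_comm' i j f

/-- product of powers of partial derivatives -/
def monOp (d : Fin n → ℕ) : Module.End ℝ S :=
  (List.ofFn fun i : Fin n => Dop i ^ (d i)).prod

lemma monOp_add (d e : Fin n → ℕ) : monOp (d + e) = monOp d * monOp e := by
  unfold monOp
  exact ofFn_prod_pow_add _ Dop_commute d e

lemma monOp_zero : monOp (0 : Fin n → ℕ) = 1 := by
  unfold monOp
  apply List.prod_eq_one
  intro y hy
  rw [List.mem_ofFn] at hy
  obtain ⟨i, rfl⟩ := hy
  simp

lemma monOp_single (i : Fin n) (k : ℕ) :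
    monOp (⇑(Finsupp.single i k) : Fin n → ℕ) = Dop i ^ k := by
  unfold monOp
  have := ofFn_prod_eq_single (fun j : Fin n => Dop j ^ (Finsupp.single i k j)) i ?_
  · rw [this]; simp
  · intro j hj
    have : (Finsupp.single i k : Fin n →₀ ℕ) j = 0 :=
      Finsupp.single_eq_of_ne' (fun h => hj h.symm)
    simp [this]

open MvPolynomial in
lemma polyOp_eq_sum (p : S) (A : Finset (Fin n →₀ ℕ)) (hA : p.support ⊆ A) :
    polyOp p = ∑ d ∈ A, MvPolynomial.coeff d p • monOp ⇑d := by
  rw [polyOp, MvPolynomial.sum_def]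
  rw [Finset.sum_subset hA]
  · exact Finset.sum_congr rfl fun d _ => rfl
  · intro d _ hd
    rw [MvPolynomial.notMem_support_iff.mp hd, zero_smul]

lemma polyOp_monomial (d : Fin n →₀ ℕ) (c : ℝ) :
    polyOp (MvPolynomial.monomial d c) = c • monOp ⇑d := by
  rw [polyOp, MvPolynomial.sum_monomial_eq]
  · rfl
  · rw [zero_smul]

lemma polyOp_add (p q : S) : polyOp (p + q) = polyOp p + polyOp q := by
  classical
  rw [polyOp_eq_sum p (p.support ∪ q.support) Finset.subset_union_left,
    polyOp_eq_sum q (p.support ∪ q.support) Finset.subset_union_right,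
    polyOp_eq_sum (p + q) (p.support ∪ q.support) MvPolynomial.support_add,
    ← Finset.sum_add_distrib]
  apply Finset.sum_congr rfl
  intro d _
  rw [MvPolynomial.coeff_add, add_smul]

lemma polyOp_smul (c : ℝ) (p : S) : polyOp (c • p) = c • polyOp p := by
  classical
  rw [polyOp_eq_sum p p.support le_rfl,
    polyOp_eq_sum (c • p) p.support (MvPolynomial.support_smul),
    Finset.smul_sum]
  apply Finset.sum_congr rfl
  intro d _
  rw [MvPolynomial.coeff_smul, smul_smul]
  rfl

def polyOpL : S →ₗ[ℝ] Module.End ℝ S where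
  toFun := polyOp
  map_add' := polyOp_add
  map_smul' := polyOp_smul

lemma polyOp_mul (p q : S) : polyOp (p * q) = polyOp p * polyOp q := by
  induction p using MvPolynomial.induction_on' with
  | add p1 p2 h1 h2 => rw [add_mul, polyOp_add, polyOp_add, h1, h2, add_mul]
  | monomial d c =>
    induction q using MvPolynomial.induction_on' with
    | add q1 q2 k1 k2 => rw [mul_add, polyOp_add, polyOp_add, k1, k2, mul_add]
    | monomial e c' =>
      rw [MvPolynomial.monomial_mul, polyOp_monomial, polyOp_monomial, polyOp_monomial]
      rw [Finsupp.coe_add, monOp_add, smul_mul_assoc, mul_smul_comm, smul_smul]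

lemma polyOp_one : polyOp (1 : S) = 1 := by
  have : (1 : S) = MvPolynomial.monomial 0 1 := by
    simp [MvPolynomial.monomial_zero']
  rw [this, polyOp_monomial, Finsupp.coe_zero, monOp_zero, one_smul]

lemma polyOp_linP (a : Fin n → ℝ) : polyOp (linP a) = pdirD a := by
  rw [linP, pdirD,
    show polyOp (∑ i, MvPolynomial.C (a i) * MvPolynomial.X i)
      = polyOpL (∑ i, MvPolynomial.C (a i) * MvPolynomial.X i) from rfl,
    map_sum]
  apply Finset.sum_congr rfl
  intro i _
  show polyOp (MvPolynomial.C (a i) * MvPolynomial.X i) = _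
  rw [MvPolynomial.C_mul_X_eq_monomial, polyOp_monomial, monOp_single, pow_one]

lemma polyOp_listProd (l : List (Fin n → ℝ)) :
    polyOp ((l.map linP).prod) = (l.map fun a => pdirD a).prod := by
  induction l with
  | nil => simpa using polyOp_one
  | cons a l ih => simp only [List.map_cons, List.prod_cons, polyOp_mul, ih, polyOp_linP]

lemma polyOp_dP {m : ℕ} (X : Fin m → Fin n → ℝ) (T : Finset (Fin m)) :
    polyOp (dP X T) = piterD X T := by
  rw [dP, piterD, ← Finset.prod_map_toList]
  have : (T.toList.map fun i => linP (X i)) = (T.toList.map X).map linP := by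
    simp [List.map_map, Function.comp]
  rw [this, polyOp_listProd, List.map_map]
  rfl

lemma coeff_pderiv (i : Fin n) (e : Fin n →₀ ℕ) (f : S) :
    MvPolynomial.coeff e (MvPolynomial.pderiv i f)
      = ((e i : ℝ) + 1) * MvPolynomial.coeff (e + Finsupp.single i 1) f := by
  classical
  induction f using MvPolynomial.induction_on' with
  | add p q hp hq => rw [map_add, MvPolynomial.coeff_add, MvPolynomial.coeff_add, hp, hq]; ring
  | monomial s a =>
    rw [pderiv_monomial, MvPolynomial.coeff_monomial, MvPolynomial.coeff_monomial]
    by_cases hs : s = e + Finsupp.single i 1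
    · subst hs
      rw [if_pos (add_tsub_cancel_right _ _)]
      have : ((e + Finsupp.single i 1 : Fin n →₀ ℕ)) i = e i + 1 := by
        rw [Finsupp.add_apply, Finsupp.single_eq_same]
      rw [this, if_pos rfl]
      push_cast
      ring
    · rw [if_neg hs]
      by_cases ht : s - Finsupp.single i 1 = e
      · rw [if_pos ht]
        have hsi : s i = 0 := by
          by_contra h0
          apply hs
          have h1 : Finsupp.single i 1 ≤ s := by
            rw [Finsupp.single_le_iff]
            omega
          rw [← ht, tsub_add_cancel_of_le h1]
        rw [hsi]
        simp
      · rw [if_neg ht, mul_zero]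

lemma coeff_Dop_pow (i : Fin n) (k : ℕ) (e : Fin n →₀ ℕ) (f : S) :
    MvPolynomial.coeff e ((Dop i ^ k) f)
      = ((e i + k).descFactorial k : ℝ) * MvPolynomial.coeff (e + Finsupp.single i k) f := by
  induction k generalizing f with
  | zero => simp
  | succ k ih =>
    rw [pow_succ, Module.End.mul_apply, ih, show (Dop i) f = MvPolynomial.pderiv i f from rfl,
      coeff_pderiv]
    have h1 : ((e + Finsupp.single i k : Fin n →₀ ℕ)) i = e i + k := by
      rw [Finsupp.add_apply, Finsupp.single_eq_same]
    have h2 : e + Finsupp.single i k + Finsupp.single i 1 = e + Finsupp.single i (k + 1) := by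
      rw [add_assoc, ← Finsupp.single_add]
    have h3 : (e i + (k+1)).descFactorial (k+1)
        = (e i + k + 1) * (e i + k).descFactorial k := by
      rw [← add_assoc]
      exact Nat.succ_descFactorial_succ _ _
    rw [h1, h2, h3]
    push_cast
    ring

lemma coeff_monOp (d e : Fin n →₀ ℕ) (f : S) :
    MvPolynomial.coeff e (monOp (⇑d) f)
      = ((∏ i, (e i + d i).descFactorial (d i) : ℕ) : ℝ) * MvPolynomial.coeff (e + d) f := by
  classical
  induction d using Finsupp.induction generalizing e with
  | zero => simp [monOp_zero]
  | single_add a k d' ha' hk ih =>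
    have hd'a : d' a = 0 := Finsupp.notMem_support_iff.mp ha'
    have hsplit : monOp ⇑(Finsupp.single a k + d') = Dop a ^ k * monOp ⇑d' := by
      rw [Finsupp.coe_add, monOp_add, monOp_single]
    rw [hsplit, Module.End.mul_apply, coeff_Dop_pow, ih]
    have hP : (∏ i, (e i + (Finsupp.single a k + d') i).descFactorial
        ((Finsupp.single a k + d') i))
        = (e a + k).descFactorial k *
          ∏ i, ((e + Finsupp.single a k) i + d' i).descFactorial (d' i) := by
      rw [← Finset.mul_prod_erase Finset.univ _ (Finset.mem_univ a),
        ← Finset.mul_prod_erase Finset.univ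
          (fun i => ((e + Finsupp.single a k) i + d' i).descFactorial (d' i))
          (Finset.mem_univ a)]
      have e1 : (Finsupp.single a k + d') a = k := by
        rw [Finsupp.add_apply, Finsupp.single_eq_same, hd'a, add_zero]
      have e2 : ((e + Finsupp.single a k) a + d' a).descFactorial (d' a) = 1 := by
        rw [hd'a, Nat.descFactorial_zero]
      rw [e1, e2, one_mul]
      congr 1
      apply Finset.prod_congr rfl
      intro i hi
      have hia : i ≠ a := (Finset.mem_erase.mp hi).1
      have e3 : (Finsupp.single a k + d') i = d' i := by
        rw [Finsupp.add_apply, Finsupp.single_eq_of_ne' (fun h => hia h.symm), zero_add]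
      have e4 : (e + Finsupp.single a k) i = e i := by
        rw [Finsupp.add_apply, Finsupp.single_eq_of_ne' (fun h => hia h.symm), add_zero]
      rw [e3, e4]
    rw [hP]
    have harg : e + Finsupp.single a k + d' = e + (Finsupp.single a k + d') := by
      rw [add_assoc]
    rw [harg]
    push_cast
    ring

lemma eval_zero_eq_coeff_zero (q : S) :
    MvPolynomial.eval (0 : Fin n → ℝ) q = MvPolynomial.coeff 0 q := by
  rw [MvPolynomial.eval_zero, MvPolynomial.constantCoeff_eq]

lemma pairing_eq_sum (p f : S) (A : Finset (Fin n →₀ ℕ)) (hA : p.support ⊆ A) :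
    pairing p f = ∑ d ∈ A, MvPolynomial.coeff d p *
      (((∏ i, (d i).factorial : ℕ) : ℝ) * MvPolynomial.coeff d f) := by
  rw [pairing, polyOp_eq_sum p A hA, LinearMap.sum_apply, map_sum]
  apply Finset.sum_congr rfl
  intro d _
  rw [LinearMap.smul_apply, eval_zero_eq_coeff_zero, MvPolynomial.coeff_smul, smul_eq_mul]
  congr 1
  rw [coeff_monOp, zero_add]
  congr 2
  apply Finset.prod_congr rfl
  intro i _
  rw [Finsupp.coe_zero, Pi.zero_apply, zero_add, Nat.descFactorial_self]

lemma pairing_monomial (d : Fin n →₀ ℕ) (c : ℝ) (f : S) :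
    pairing (MvPolynomial.monomial d c) f
      = c * (((∏ i, (d i).factorial : ℕ) : ℝ) * MvPolynomial.coeff d f) := by
  classical
  rw [pairing_eq_sum _ f {d} MvPolynomial.support_monomial_subset, Finset.sum_singleton,
    MvPolynomial.coeff_monomial, if_pos rfl]

lemma pairing_comm (p f : S) : pairing p f = pairing f p := by
  classical
  rw [pairing_eq_sum p f (p.support ∪ f.support) Finset.subset_union_left,
    pairing_eq_sum f p (p.support ∪ f.support) Finset.subset_union_right]
  exact Finset.sum_congr rfl fun d _ => by ring

lemma pairing_mul (p q f : S) : pairing (p * q) f = pairing p (polyOp q f) := by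
  rw [pairing, pairing, polyOp_mul, Module.End.mul_apply]

lemma pairing_sub_left (p q f : S) : pairing (p - q) f = pairing p f - pairing q f := by
  rw [pairing, pairing, pairing, show polyOp (p - q) = polyOp p - polyOp q from map_sub polyOpL p q,
    LinearMap.sub_apply, map_sub]

lemma mem_Dspace {m : ℕ} {X : Fin m → Fin n → ℝ} {f : S} :
    f ∈ Dspace X ↔ ∀ T : Finset (Fin m), IsCocircuit X T → piterD X T f = 0 := by
  simp only [Dspace, Submodule.mem_iInf, LinearMap.mem_ker, Set.mem_setOf_eq]

lemma polyOp_eq_zero_of_mem_IX {m : ℕ} (X : Fin m → Fin n → ℝ) {p : S} (hp : p ∈ IX X)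
    {f : S} (hf : f ∈ Dspace X) : polyOp p f = 0 := by
  rw [IX] at hp
  induction hp using Submodule.span_induction with
  | mem q hq =>
    obtain ⟨T, hT, rfl⟩ := hq
    rw [polyOp_dP]
    exact mem_Dspace.mp hf T hT
  | zero => rw [show polyOp (0 : S) = 0 from map_zero polyOpL, LinearMap.zero_apply]
  | add q r _ _ hq hr =>
    rw [polyOp_add, LinearMap.add_apply, hq, hr, add_zero]
  | smul r q _ hq =>
    rw [smul_eq_mul, polyOp_mul, Module.End.mul_apply, hq, map_zero]

lemma pairing_eq_zero_of_mem_IX {m : ℕ} (X : Fin m → Fin n → ℝ) {p : S} (hp : p ∈ IX X)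
    {f : S} (hf : f ∈ Dspace X) : pairing p f = 0 := by
  rw [pairing, polyOp_eq_zero_of_mem_IX X hp hf, map_zero]

lemma factorial_prod_ne_zero (d : Fin n →₀ ℕ) :
    ((∏ i, (d i).factorial : ℕ) : ℝ) ≠ 0 := by
  rw [Nat.cast_ne_zero]
  exact Finset.prod_ne_zero_iff.mpr fun i _ => (Nat.factorial_pos _).ne'

lemma eq_zero_of_pairing_all (f : S) (h : ∀ p : S, pairing p f = 0) : f = 0 := by
  apply MvPolynomial.ext
  intro d
  have hd := h (MvPolynomial.monomial d 1)
  rw [pairing_monomial, one_mul] at hd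
  rw [MvPolynomial.coeff_zero]
  exact (mul_eq_zero.mp hd).resolve_left (factorial_prod_ne_zero d)

lemma polyOp_mem_Dspace {m : ℕ} {X : Fin m → Fin n → ℝ} (q : S) {f : S}
    (hf : f ∈ Dspace X) : polyOp q f ∈ Dspace X := by
  rw [mem_Dspace] at hf ⊢
  intro T hT
  have hcomm : piterD X T (polyOp q f) = polyOp q (piterD X T f) := by
    rw [← polyOp_dP, ← Module.End.mul_apply, ← Module.End.mul_apply, ← polyOp_mul, ← polyOp_mul,
      mul_comm]
  rw [hcomm, hf T hT, map_zero]

lemma polyOp_zero_of_pairing_zero {m : ℕ} {X : Fin m → Fin n → ℝ} {p : S}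
    (hp : ∀ f ∈ Dspace X, pairing p f = 0) :
    ∀ f ∈ Dspace X, polyOp p f = 0 := by
  intro f hf
  apply MvPolynomial.ext
  intro d
  have h0 := hp (polyOp (MvPolynomial.monomial d 1) f) (polyOp_mem_Dspace _ hf)
  have h1 : pairing (MvPolynomial.monomial d 1) (polyOp p f) = 0 := by
    rw [← pairing_mul, mul_comm, pairing_mul]
    exact h0
  rw [pairing_monomial, one_mul] at h1
  rw [MvPolynomial.coeff_zero]
  exact (mul_eq_zero.mp h1).resolve_left (factorial_prod_ne_zero d)

lemma pairing_eq_zero_of_degree_ne {k : ℕ} {q f : S}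
    (hf : f ∈ MvPolynomial.homogeneousSubmodule (Fin n) ℝ k)
    (hq : ∀ d ∈ q.support, Finsupp.degree d ≠ k) : pairing q f = 0 := by
  rw [pairing_eq_sum q f q.support le_rfl]
  apply Finset.sum_eq_zero
  intro d hd
  have hz : MvPolynomial.coeff d f = 0 :=
    ((MvPolynomial.mem_homogeneousSubmodule _ _).mp hf).coeff_eq_zero (hq d hd)
  rw [hz, mul_zero, mul_zero]

lemma linP_homog (a : Fin n → ℝ) : (linP a).IsHomogeneous 1 := by
  rw [linP]
  apply MvPolynomial.IsHomogeneous.sum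
  intro i _
  exact MvPolynomial.isHomogeneous_C_mul_X _ _

lemma dP_homog {m : ℕ} (X : Fin m → Fin n → ℝ) (T : Finset (Fin m)) :
    (dP X T).IsHomogeneous T.card := by
  rw [dP, show T.card = ∑ _i ∈ T, 1 from by simp]
  exact MvPolynomial.IsHomogeneous.prod _ _ _ fun i _ => linP_homog (X i)

/-- the global pairing as a bilinear form -/
def pairingBilin : LinearMap.BilinForm ℝ S :=
  LinearMap.mk₂ ℝ pairing
    (fun p q f => by
      rw [pairing, pairing, pairing, polyOp_add, LinearMap.add_apply,
        eval_zero_eq_coeff_zero, eval_zero_eq_coeff_zero, eval_zero_eq_coeff_zero,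
        MvPolynomial.coeff_add])
    (fun c p f => by
      rw [pairing, pairing, polyOp_smul, LinearMap.smul_apply,
        eval_zero_eq_coeff_zero, eval_zero_eq_coeff_zero, MvPolynomial.coeff_smul,
        smul_eq_mul])
    (fun p f g => by
      rw [pairing, pairing, pairing, map_add, eval_zero_eq_coeff_zero,
        eval_zero_eq_coeff_zero, eval_zero_eq_coeff_zero, MvPolynomial.coeff_add])
    (fun c p f => by
      rw [pairing, pairing, map_smul, eval_zero_eq_coeff_zero,
        eval_zero_eq_coeff_zero, MvPolynomial.coeff_smul, smul_eq_mul])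

@[simp] lemma pairingBilin_apply (p f : S) : pairingBilin p f = pairing p f := rfl

lemma eq_zero_of_pairing_self (g : S) (h : pairing g g = 0) : g = 0 := by
  classical
  by_contra hg
  obtain ⟨d, hd⟩ := (MvPolynomial.support_nonempty.mpr hg)
  rw [pairing_eq_sum g g g.support le_rfl] at h
  have hterm : ∀ e ∈ g.support, (0:ℝ) ≤ MvPolynomial.coeff e g *
      (((∏ i, (e i).factorial : ℕ) : ℝ) * MvPolynomial.coeff e g) := by
    intro e _
    have : MvPolynomial.coeff e g * (((∏ i, (e i).factorial : ℕ) : ℝ) * MvPolynomial.coeff e g)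
        = ((∏ i, (e i).factorial : ℕ) : ℝ) * (MvPolynomial.coeff e g) ^ 2 := by ring
    rw [this]
    positivity
  have h0 := (Finset.sum_eq_zero_iff_of_nonneg hterm).mp h d hd
  have hcd : MvPolynomial.coeff d g ≠ 0 := MvPolynomial.mem_support_iff.mp hd
  have : MvPolynomial.coeff d g * (((∏ i, (d i).factorial : ℕ) : ℝ) * MvPolynomial.coeff d g)
      ≠ 0 := by
    apply mul_ne_zero hcd (mul_ne_zero (factorial_prod_ne_zero d) hcd)
  exact this h0

section Degreewise
variable {m : ℕ} (X : Fin m → Fin n → ℝ) (k : ℕ)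

local notation "Wk" => MvPolynomial.homogeneousSubmodule (Fin n) ℝ k

instance : FiniteDimensional ℝ (MvPolynomial.homogeneousSubmodule (Fin n) ℝ k) := by
  apply Submodule.finiteDimensional_of_le (S₂ := MvPolynomial.restrictTotalDegree (Fin n) ℝ k)
  intro p hp
  rw [MvPolynomial.mem_restrictTotalDegree]
  exact ((MvPolynomial.mem_homogeneousSubmodule _ _).mp hp).totalDegree_le

/-- the pairing restricted to the degree-k homogeneous part -/
def Bk : LinearMap.BilinForm ℝ Wk := pairingBilin.restrict Wk

lemma Bk_apply (x y : Wk) : Bk k x y = pairing (x : S) (y : S) := rfl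

lemma Bk_refl : (Bk (n := n) k).IsRefl := by
  intro x y h
  rw [Bk_apply, pairing_comm] at h
  exact h

lemma Bk_nondeg : (Bk (n := n) k).Nondegenerate := by
  constructor
  · intro x hx
    have := hx x
    rw [Bk_apply] at this
    exact Subtype.ext (eq_zero_of_pairing_self _ this)
  · intro x hx
    have := hx x
    rw [Bk_apply] at this
    exact Subtype.ext (eq_zero_of_pairing_self _ this)

/-- I_X in degree k -/
def IWk : Submodule ℝ (MvPolynomial.homogeneousSubmodule (Fin n) ℝ k) :=
  Submodule.comap (MvPolynomial.homogeneousSubmodule (Fin n) ℝ k).subtype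
    ((IX X).restrictScalars ℝ)

/-- D(X) in degree k -/
def DWk : Submodule ℝ (MvPolynomial.homogeneousSubmodule (Fin n) ℝ k) :=
  Submodule.comap (MvPolynomial.homogeneousSubmodule (Fin n) ℝ k).subtype (Dspace X)

lemma mem_IWk_iff (x : MvPolynomial.homogeneousSubmodule (Fin n) ℝ k) :
    x ∈ IWk X k ↔ (x : S) ∈ IX X := Iff.rfl

lemma mem_DWk_iff (x : MvPolynomial.homogeneousSubmodule (Fin n) ℝ k) :
    x ∈ DWk X k ↔ (x : S) ∈ Dspace X := Iff.rfl

lemma orth_IWk_eq_DWk : (Bk k).orthogonal (IWk X k) = DWk X k := by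
  classical
  ext x
  obtain ⟨f, hfW⟩ := x
  constructor
  · intro h
    rw [mem_DWk_iff]
    show f ∈ Dspace X
    rw [mem_Dspace]
    intro T hT
    rw [← polyOp_dP]
    apply MvPolynomial.ext
    intro e
    set q : S := MvPolynomial.monomial e 1 * dP X T with hqdef
    have hq : q.IsHomogeneous (e.degree + T.card) :=
      (MvPolynomial.isHomogeneous_monomial 1 rfl).mul (dP_homog X T)
    have key : pairing q f
        = ((∏ i, (e i).factorial : ℕ) : ℝ) * MvPolynomial.coeff e (polyOp (dP X T) f) := by
      rw [hqdef, pairing_mul, pairing_monomial, one_mul]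
    have hq0 : pairing q f = 0 := by
      by_cases hdeg : e.degree + T.card = k
      · have hqIX : q ∈ IX X :=
          Ideal.mul_mem_left _ _ (Ideal.subset_span ⟨T, hT, rfl⟩)
        have hqW : q ∈ Wk := (MvPolynomial.mem_homogeneousSubmodule _ _).mpr (hdeg ▸ hq)
        exact h ⟨q, hqW⟩ ((mem_IWk_iff X k ⟨q, hqW⟩).mpr hqIX)
      · apply pairing_eq_zero_of_degree_ne hfW
        intro d hd hdk
        have hne : d.degree ≠ e.degree + T.card := by
          rw [hdk]; exact fun hcon => hdeg hcon.symm
        exact MvPolynomial.mem_support_iff.mp hd (hq.coeff_eq_zero hne)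
    rw [hq0] at key
    rw [MvPolynomial.coeff_zero]
    exact ((mul_eq_zero.mp key.symm).resolve_left (factorial_prod_ne_zero e))
  · intro hfD y hy
    show pairing (y : S) f = 0
    exact pairing_eq_zero_of_mem_IX X ((mem_IWk_iff X k y).mp hy)
      ((mem_DWk_iff X k ⟨f, hfW⟩).mp hfD)

end Degreewise

lemma mem_IX_of_pairing_zero {m : ℕ} (X : Fin m → Fin n → ℝ) {p : S}
    (Hp : ∀ f ∈ Dspace X, pairing p f = 0) : p ∈ IX X := by
  classical
  have hp1 := polyOp_zero_of_pairing_zero Hp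
  rw [← MvPolynomial.sum_homogeneousComponent p]
  apply Submodule.sum_mem
  intro k _
  set pk := MvPolynomial.homogeneousComponent k p with hpk
  have hpkW : pk ∈ MvPolynomial.homogeneousSubmodule (Fin n) ℝ k :=
    (MvPolynomial.mem_homogeneousSubmodule _ _).mpr
      (MvPolynomial.homogeneousComponent_isHomogeneous k p)
  have horth : (⟨pk, hpkW⟩ : MvPolynomial.homogeneousSubmodule (Fin n) ℝ k)
      ∈ (Bk k).orthogonal (DWk X k) := by
    intro y hy
    show pairing (y : S) pk = 0
    have hyD : (y : S) ∈ Dspace X := (mem_DWk_iff X k y).mp hy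
    have hyW : (y : S) ∈ MvPolynomial.homogeneousSubmodule (Fin n) ℝ k := y.2
    rw [pairing_comm]
    have hsub : pairing (p - pk) (y : S) = 0 := by
      apply pairing_eq_zero_of_degree_ne hyW
      intro d hd
      have hcd : MvPolynomial.coeff d (p - pk) ≠ 0 := MvPolynomial.mem_support_iff.mp hd
      intro hdk
      apply hcd
      rw [MvPolynomial.coeff_sub, hpk, MvPolynomial.coeff_homogeneousComponent,
        if_pos hdk, sub_self]
    have hpf : pairing p (y : S) = 0 := by
      rw [pairing, hp1 (y : S) hyD, map_zero]
    rw [pairing_sub_left] at hsub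
    linarith
  rw [← orth_IWk_eq_DWk X k] at horth
  rw [LinearMap.BilinForm.orthogonal_orthogonal (Bk_nondeg k) (Bk_refl k)] at horth
  exact (mem_IWk_iff X k _).mp horth

theorem stmt9 {n m : ℕ} (X : Fin m → Fin n → ℝ)
    (hX0 : ∀ i, X i ≠ 0)
    (hspan : Submodule.span ℝ (Set.range X) = ⊤) :
    -- the pairing descends: I_X pairs to zero with D(X)
    (∀ p ∈ IX X, ∀ f ∈ Dspace X, pairing p f = 0) ∧
    -- nondegeneracy on the left, modulo I_X
    (∀ p : MvPolynomial (Fin n) ℝ,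
      (∀ f ∈ Dspace X, pairing p f = 0) → p ∈ IX X) ∧
    -- nondegeneracy on the right
    (∀ f ∈ Dspace X, (∀ p : MvPolynomial (Fin n) ℝ, pairing p f = 0) → f = 0) :=
  ⟨fun _p hp _f hf => pairing_eq_zero_of_mem_IX X hp hf,
   fun _p hp => mem_IX_of_pairing_zero X hp,
   fun f _ hf => eq_zero_of_pairing_all f hf⟩
end
end
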